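/- arXiv:1605.02966 — 10 statements merged into one kernel-verified Lean document; each statement's English description precedes it below -/
import Mathlib

section
/- Let γ be a gauge on ℝ^d, x, y ∈ ℝ^d with 0 ≤ ε < γ(x). Then x ⊥_B^ε y (i.e., γ(x) ≤ γ(x + λy) + ε for all λ ∈ ℝ) if and only if there exists x* ∈ ∂_ε γ(x) with ⟨x*, y⟩ = 0. -/
open scoped RealInnerProductSpace

noncomputable section

variable {d : ℕ}

/-- A gauge on ℝ^d: nonnegative, vanishing only at 0, positively homogeneous, subadditive. -/
def IsGauge (γ : EuclideanSpace ℝ (Fin d) → ℝ) : Prop :=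
  (∀ x, 0 ≤ γ x) ∧ (∀ x, γ x = 0 → x = 0) ∧
  (∀ (x : EuclideanSpace ℝ (Fin d)) (l : ℝ), 0 < l → γ (l • x) = l * γ x) ∧
  (∀ x y, γ (x + y) ≤ γ x + γ y)

/-- The polar function of a gauge. -/
def polarGauge (γ : EuclideanSpace ℝ (Fin d) → ℝ) : EuclideanSpace ℝ (Fin d) → ℝ :=
  fun xs => sInf {l : ℝ | 0 < l ∧ ∀ x, ⟪xs, x⟫ ≤ l * γ x}

/-- The ε-subdifferential of f at x. -/
def epsSubdiff (f : EuclideanSpace ℝ (Fin d) → ℝ) (ε : ℝ) (x : EuclideanSpace ℝ (Fin d)) :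
    Set (EuclideanSpace ℝ (Fin d)) :=
  {xs | ∀ y, ⟪xs, y - x⟫ ≤ f y - f x + ε}

/-- ε-Birkhoff orthogonality: x ⊥_B^ε y iff γ x ≤ γ (x + λ y) + ε for all λ. -/
def BirkhoffEps (γ : EuclideanSpace ℝ (Fin d) → ℝ) (ε : ℝ)
    (x y : EuclideanSpace ℝ (Fin d)) : Prop :=
  ∀ l : ℝ, γ x ≤ γ (x + l • y) + ε

/-- The ε-directional derivative of f at x in direction y. -/
def epsDirDeriv (f : EuclideanSpace ℝ (Fin d) → ℝ) (ε : ℝ)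
    (x y : EuclideanSpace ℝ (Fin d)) : ℝ :=
  sInf {q : ℝ | ∃ l : ℝ, 0 < l ∧ q = (f (x + l • y) - f x + ε) / l}

theorem birkhoff_iff_annihilating_eps_subgradient (γ : EuclideanSpace ℝ (Fin d) → ℝ)
    (hγ : IsGauge γ) (x y : EuclideanSpace ℝ (Fin d)) (ε : ℝ) (hε : 0 ≤ ε)
    (hεx : ε < γ x) :
    BirkhoffEps γ ε x y ↔ ∃ xs ∈ epsSubdiff γ ε x, ⟪xs, y⟫ = 0 := by
  obtain ⟨hpos, hzero, hhom, hadd⟩ := hγ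
  have hγ0 : γ 0 = 0 := by
    have h2 := hhom 0 2 (by norm_num)
    rw [smul_zero] at h2
    linarith
  constructor
  · intro hB
    have hx0 : x ≠ 0 := by
      intro h
      rw [h, hγ0] at hεx
      linarith
    set S : EuclideanSpace ℝ (Fin d) → Set ℝ :=
      fun z => {q | ∃ l : ℝ, q = γ (z + l • y)} with hS
    have hne : ∀ z, (S z).Nonempty := fun z => ⟨γ (z + (0:ℝ) • y), 0, rfl⟩
    have hbdd : ∀ z, BddBelow (S z) := by
      intro z
      refine ⟨0, ?_⟩
      rintro q ⟨l, rfl⟩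
      exact hpos _
    set N : EuclideanSpace ℝ (Fin d) → ℝ := fun z => sInf (S z) with hNdef
    have hNle : ∀ z l, N z ≤ γ (z + l • y) := fun z l => csInf_le (hbdd z) ⟨l, rfl⟩
    have hN0 : ∀ z, 0 ≤ N z := by
      intro z
      apply le_csInf (hne z)
      rintro q ⟨l, rfl⟩
      exact hpos _
    have hNγ : ∀ z, N z ≤ γ z := by
      intro z
      have := hNle z 0
      rwa [zero_smul, add_zero] at this
    have hNx : γ x - ε ≤ N x := by
      apply le_csInf (hne x)
      rintro q ⟨l, rfl⟩
      linarith [hB l]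
    have hNhom : ∀ c : ℝ, 0 < c → ∀ z, N (c • z) = c * N z := by
      intro c hc z
      apply le_antisymm
      · rw [← div_le_iff₀' hc]
        apply le_csInf (hne z)
        rintro q ⟨l, rfl⟩
        rw [div_le_iff₀' hc]
        have he : c • z + (c * l) • y = c • (z + l • y) := by
          rw [smul_add, smul_smul]
        calc N (c • z) ≤ γ (c • z + (c * l) • y) := hNle _ _
          _ = c * γ (z + l • y) := by rw [he, hhom _ c hc]
      · apply le_csInf (hne _)
        rintro q ⟨l, rfl⟩
        have he : c • z + l • y = c • (z + (l / c) • y) := by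
          rw [smul_add, smul_smul, mul_div_cancel₀ _ (ne_of_gt hc)]
        rw [he, hhom _ c hc]
        exact mul_le_mul_of_nonneg_left (hNle z (l / c)) (le_of_lt hc)
    have hNadd : ∀ z w, N (z + w) ≤ N z + N w := by
      intro z w
      have key : ∀ q1 ∈ S z, ∀ q2 ∈ S w, N (z + w) ≤ q1 + q2 := by
        rintro q1 ⟨l1, rfl⟩ q2 ⟨l2, rfl⟩
        have he : z + w + (l1 + l2) • y = (z + l1 • y) + (w + l2 • y) := by
          module
        calc N (z + w) ≤ γ (z + w + (l1 + l2) • y) := hNle _ _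
          _ ≤ _ := by rw [he]; exact hadd _ _
      have h2 : ∀ q1 ∈ S z, N (z + w) - q1 ≤ N w := by
        intro q1 hq1
        apply le_csInf (hne w)
        intro q2 hq2
        linarith [key q1 hq1 q2 hq2]
      have h3 : N (z + w) - N w ≤ N z := by
        apply le_csInf (hne z)
        intro q1 hq1
        linarith [h2 q1 hq1]
      linarith
    -- Hahn-Banach
    set e := LinearEquiv.toSpanNonzeroSingleton ℝ (EuclideanSpace ℝ (Fin d)) x hx0 with he
    set f : (ℝ ∙ x) →ₗ[ℝ] ℝ := (γ x - ε) • (e.symm : (ℝ ∙ x) →ₗ[ℝ] ℝ) with hf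
    have hfx : ∀ (a : ℝ) (hm : a • x ∈ (ℝ ∙ x)), f ⟨a • x, hm⟩ = a * (γ x - ε) := by
      intro a hm
      have : (⟨a • x, hm⟩ : ℝ ∙ x) = e a := by
        ext
        simp [he, LinearEquiv.toSpanNonzeroSingleton]
      rw [this]
      simp [hf, mul_comm]
    have hfle : ∀ v : (ℝ ∙ x : Submodule ℝ (EuclideanSpace ℝ (Fin d))), f v ≤ N v := by
      rintro ⟨v, hv⟩
      obtain ⟨a, rfl⟩ := Submodule.mem_span_singleton.mp hv
      rw [hfx a hv]
      rcases lt_trichotomy a 0 with h | h | h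
      · have : a * (γ x - ε) ≤ 0 := mul_nonpos_of_nonpos_of_nonneg (le_of_lt h) (by linarith)
        exact this.trans (hN0 _)
      · subst h
        simpa using hN0 (0 : EuclideanSpace ℝ (Fin d))
      · rw [hNhom a h]
        have := mul_le_mul_of_nonneg_left hNx (le_of_lt h)
        linarith
    obtain ⟨g, hg_ext, hg_le⟩ :=
      exists_extension_of_le_sublinear ⟨ℝ ∙ x, f⟩ N hNhom hNadd hfle
    have hgx : g x = γ x - ε := by
      have hm : x ∈ (ℝ ∙ x : Submodule ℝ (EuclideanSpace ℝ (Fin d))) :=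
        Submodule.mem_span_singleton_self x
      have h1 := hg_ext ⟨x, hm⟩
      have h2 : x = (1:ℝ) • x := (one_smul ℝ x).symm
      have h3 := hfx 1 (by rw [← h2]; exact hm)
      simp only [one_mul] at h3
      rw [h1]
      convert h3 using 2
      exact congrArg f (Subtype.ext h2)
    have hgy : g y = 0 := by
      have h1 : g y ≤ 0 := by
        have := (hg_le y).trans (hNle y (-1))
        rwa [neg_one_smul, add_neg_cancel, hγ0] at this
      have h2 : g (-y) ≤ 0 := by
        have := (hg_le (-y)).trans (hNle (-y) 1)
        rwa [one_smul, neg_add_cancel, hγ0] at this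
      rw [map_neg] at h2
      linarith
    have hgγ : ∀ z, g z ≤ γ z := fun z => (hg_le z).trans (hNγ z)
    -- Riesz representation
    set xs := (InnerProductSpace.toDual ℝ (EuclideanSpace ℝ (Fin d))).symm
      (LinearMap.toContinuousLinearMap g) with hxs
    have hinner : ∀ z, ⟪xs, z⟫ = g z := by
      intro z
      rw [hxs, InnerProductSpace.toDual_symm_apply]
      rfl
    refine ⟨xs, ?_, hinner y ▸ hgy⟩
    intro z
    rw [hinner, map_sub, hgx]
    have := hgγ z
    linarith
  · rintro ⟨xs, hxs, hxy⟩ l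
    have h := hxs (x + l • y)
    rw [add_sub_cancel_left, real_inner_smul_right, hxy, mul_zero] at h
    linarith
end
end

section
/- Let γ be a gauge on ℝ^d, x, y ∈ ℝ^d, α ∈ ℝ. If x ⊥_B (αx + y), then −γ'(x; −y) ≤ −α γ(x) ≤ γ'(x; y), where γ'(x;·) is the directional derivative of γ at x. -/
open scoped RealInnerProductSpace

noncomputable section

variable {d : ℕ}

lemma key_gauge_ineq (γ : EuclideanSpace ℝ (Fin d) → ℝ) (hγ : IsGauge γ)
    (x y : EuclideanSpace ℝ (Fin d)) (α : ℝ)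
    (h : BirkhoffEps γ 0 x (α • x + y)) (l : ℝ) (hl : 0 < l) :
    (1 - l * α) * γ x ≤ γ (x + l • y) := by
  obtain ⟨hnn, -, hpos, -⟩ := hγ
  rcases le_or_gt (1 - l * α) 0 with hc | hc
  · nlinarith [hnn (x + l • y), hnn x]
  · set c : ℝ := 1 / (1 - l * α) with hcdef
    have hc0 : 0 < c := by positivity
    have hc1 : c * (1 - l * α) = 1 := by
      rw [hcdef]; field_simp
    have heq : x + (c * l) • (α • x + y) = c • (x + l • y) := by
      match_scalars
      · nlinarith
      · ring
    have := h (c * l)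
    rw [heq, hpos _ c hc0] at this
    have h2 : γ x ≤ c * γ (x + l • y) := by linarith
    have h3 : (1 - l * α) * γ x ≤ (1 - l * α) * (c * γ (x + l • y)) :=
      mul_le_mul_of_nonneg_left h2 hc.le
    have h4 : (1 - l * α) * (c * γ (x + l • y)) = γ (x + l • y) := by
      rw [← mul_assoc, mul_comm (1 - l * α) c, hc1, one_mul]
    linarith

theorem birkhoff_directional_derivative_bounds (γ : EuclideanSpace ℝ (Fin d) → ℝ)
    (hγ : IsGauge γ) (x y : EuclideanSpace ℝ (Fin d)) (α : ℝ)
    (h : BirkhoffEps γ 0 x (α • x + y)) :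
    -(epsDirDeriv γ 0 x (-y)) ≤ -(α * γ x) ∧ -(α * γ x) ≤ epsDirDeriv γ 0 x y := by
  have h' : BirkhoffEps γ 0 x ((-α) • x + (-y)) := by
    intro l
    have := h (-l)
    have heq : x + (-l) • (α • x + y) = x + l • ((-α) • x + -y) := by module
    rwa [heq] at this
  constructor
  · rw [neg_le_neg_iff]
    unfold epsDirDeriv
    apply le_csInf
    · exact ⟨_, 1, one_pos, rfl⟩
    rintro q ⟨l, hl, rfl⟩
    rw [le_div_iff₀ hl]
    have := key_gauge_ineq γ hγ x (-y) (-α) h' l hl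
    nlinarith
  · unfold epsDirDeriv
    apply le_csInf
    · exact ⟨_, 1, one_pos, rfl⟩
    rintro q ⟨l, hl, rfl⟩
    rw [le_div_iff₀ hl]
    have := key_gauge_ineq γ hγ x y α h l hl
    nlinarith
end
end

section
/- Let γ be a gauge on ℝ^d, x, y ∈ ℝ^d, and 0 ≤ ε < γ(x). The set of numbers α ∈ ℝ for which x ⊥_B^ε (αx + y) is a non-empty compact interval. Moreover, if x ⊥_B^ε (αx+y), then |α| ≤ max{γ(y)/(γ(x)−ε), γ(−y)/(γ(x)−ε)}. -/
open scoped RealInnerProductSpace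

noncomputable section

variable {d : ℕ}

theorem right_birkhoff_existence (γ : EuclideanSpace ℝ (Fin d) → ℝ) (hγ : IsGauge γ)
    (x y : EuclideanSpace ℝ (Fin d)) (ε : ℝ) (hε : 0 ≤ ε) (hεx : ε < γ x) :
    (∃ a b : ℝ, a ≤ b ∧
      {α : ℝ | BirkhoffEps γ ε x (α • x + y)} = Set.Icc a b) ∧
    ∀ α : ℝ, BirkhoffEps γ ε x (α • x + y) →
      |α| ≤ max (γ y / (γ x - ε)) (γ (-y) / (γ x - ε)) := by
  obtain ⟨hnn, -, hhom, hsub⟩ := hγ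
  set c := γ x - ε with hc_def
  have hc : 0 < c := sub_pos.mpr hεx
  have hclex : c ≤ γ x := by simp only [hc_def]; linarith
  -- algebraic identity
  have key : ∀ α l : ℝ, l ≠ 0 → x + l • (α • x + y) = l • ((1/l + α) • x + y) := by
    intro α l hl
    have h1 : l * (1/l + α) = 1 + l * α := by field_simp
    have h2 : l • ((1/l + α) • x + y) = (1 + l * α) • x + l • y := by
      rw [smul_add, smul_smul, h1]
    rw [h2, smul_add, smul_smul, add_smul, one_smul]
    abel
  -- negative homogeneity
  have hhomneg : ∀ (z : EuclideanSpace ℝ (Fin d)) (l : ℝ), l < 0 → γ (l • z) = (-l) * γ (-z) := by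
    intro z l hl
    have : l • z = (-l) • (-z) := by rw [smul_neg, neg_smul, neg_neg]
    rw [this, hhom _ _ (by linarith)]
  -- the key equivalence
  have equiv : ∀ α : ℝ, BirkhoffEps γ ε x (α • x + y) ↔
      (∀ t : ℝ, t - γ (t • x + y) / c ≤ α) ∧ (∀ t : ℝ, α ≤ t + γ (-(t • x + y)) / c) := by
    intro α
    constructor
    · intro h
      constructor
      · intro t
        by_cases ht : t ≤ α
        · have hg := hnn (t • x + y)
          have : 0 ≤ γ (t • x + y) / c := div_nonneg hg hc.le
          linarith
        · push_neg at ht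
          have htα : 0 < t - α := by linarith
          have hl : (0:ℝ) < 1/(t-α) := by positivity
          have hlt : 1/(1/(t-α)) + α = t := by field_simp; ring
          have h2 := h (1/(t-α))
          rw [key α _ (ne_of_gt hl), hlt, hhom _ _ hl] at h2
          -- h2 : γ x ≤ 1/(t-α) * γ (t•x+y) + ε
          have hg := hnn (t • x + y)
          have h3 : c * (t - α) ≤ γ (t • x + y) := by
            have : c ≤ 1/(t-α) * γ (t • x + y) := by linarith
            calc c * (t - α) ≤ (1/(t-α) * γ (t • x + y)) * (t - α) :=
                  mul_le_mul_of_nonneg_right this htα.le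
              _ = γ (t • x + y) := by field_simp
          have : t - α ≤ γ (t • x + y) / c := (le_div_iff₀ hc).mpr (by nlinarith)
          linarith
      · intro t
        by_cases ht : α ≤ t
        · have hg := hnn (-(t • x + y))
          have : 0 ≤ γ (-(t • x + y)) / c := div_nonneg hg hc.le
          linarith
        · push_neg at ht
          have htα : t - α < 0 := by linarith
          have hl : 1/(t-α) < 0 := by
            apply div_neg_of_pos_of_neg one_pos htα
          have hlt : 1/(1/(t-α)) + α = t := by
            rw [one_div_one_div]; ring
          have h2 := h (1/(t-α))
          rw [key α _ (ne_of_lt hl), hlt, hhomneg _ _ hl] at h2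
          -- h2 : γ x ≤ -(1/(t-α)) * γ (-(t•x+y)) + ε
          have h3 : c * (α - t) ≤ γ (-(t • x + y)) := by
            have h4 : c ≤ -(1/(t-α)) * γ (-(t • x + y)) := by linarith
            have h5 : 0 < α - t := by linarith
            have hne : t - α ≠ 0 := ne_of_lt htα
            have hone : -(1/(t-α)) * (α - t) = 1 := by field_simp; ring
            calc c * (α - t) ≤ (-(1/(t-α)) * γ (-(t • x + y))) * (α - t) :=
                  mul_le_mul_of_nonneg_right h4 h5.le
              _ = (-(1/(t-α)) * (α - t)) * γ (-(t • x + y)) := by ring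
              _ = γ (-(t • x + y)) := by rw [hone, one_mul]
          have : α - t ≤ γ (-(t • x + y)) / c := (le_div_iff₀ hc).mpr (by nlinarith)
          linarith
    · rintro ⟨h1, h2⟩ l
      rcases lt_trichotomy l 0 with hl | hl | hl
      · have hl0 : l ≠ 0 := ne_of_lt hl
        rw [key α l hl0, hhomneg _ _ hl]
        have h3 := h2 (1/l + α)
        have h4 : -(1/l) ≤ γ (-((1/l + α) • x + y)) / c := by linarith
        have h5 : c * (-(1/l)) ≤ γ (-((1/l + α) • x + y)) := by
          rw [le_div_iff₀ hc] at h4; nlinarith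
        have h6 : (-l) * (c * (-(1/l))) = c := by field_simp
        have h7 : (-l) * (c * (-(1/l))) ≤ (-l) * γ (-((1/l + α) • x + y)) :=
          mul_le_mul_of_nonneg_left h5 (by linarith)
        linarith
      · subst hl
        simp only [zero_smul, add_zero]
        linarith
      · set t := 1/l + α with ht_def
        have hta : t - α = 1/l := by rw [ht_def]; ring
        rw [key α l (ne_of_gt hl), hhom _ _ hl]
        have h3 := h1 t
        have h4 : t - α ≤ γ (t • x + y) / c := by linarith
        have h5 : c * (t - α) ≤ γ (t • x + y) := by
          rw [le_div_iff₀ hc] at h4; nlinarith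
        have h7 : c ≤ l * γ (t • x + y) := by
          have : c * (1/l) ≤ γ (t • x + y) := by rw [← hta]; exact h5
          calc c = l * (c * (1/l)) := by field_simp
            _ ≤ l * γ (t • x + y) := mul_le_mul_of_nonneg_left this hl.le
        linarith
  -- bounds for the sup/inf
  have hLub : ∀ t : ℝ, t - γ (t • x + y) / c ≤ γ (-y) / c := by
    intro t
    by_cases ht : t ≤ 0
    · have : 0 ≤ γ (t • x + y) / c := div_nonneg (hnn _) hc.le
      have : 0 ≤ γ (-y) / c := div_nonneg (hnn _) hc.le
      linarith [div_nonneg (hnn (t • x + y)) hc.le]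
    · push_neg at ht
      have hsplit : t • x = (t • x + y) + (-y) := by abel
      have h1 : γ (t • x) ≤ γ (t • x + y) + γ (-y) := by
        have := hsub (t • x + y) (-y)
        rw [← hsplit] at this; exact this
      rw [hhom _ _ ht] at h1
      have h2 : t * c ≤ γ (t • x + y) + γ (-y) := by nlinarith
      have h3 : t ≤ (γ (t • x + y) + γ (-y)) / c := (le_div_iff₀ hc).mpr (by nlinarith)
      rw [add_div] at h3
      linarith
  have hUlb : ∀ t : ℝ, -(γ y / c) ≤ t + γ (-(t • x + y)) / c := by
    intro t
    by_cases ht : 0 ≤ t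
    · have h1 : 0 ≤ γ (-(t • x + y)) / c := div_nonneg (hnn _) hc.le
      have h2 : 0 ≤ γ y / c := div_nonneg (hnn _) hc.le
      linarith
    · push_neg at ht
      have hmt : 0 < -t := by linarith
      have hsplit : (-t) • x = -(t • x + y) + y := by
        rw [neg_smul]; abel
      have h1 : γ ((-t) • x) ≤ γ (-(t • x + y)) + γ y := by
        have := hsub (-(t • x + y)) y
        rw [← hsplit] at this; exact this
      rw [hhom _ _ hmt] at h1
      have h2 : (-t) * c ≤ γ (-(t • x + y)) + γ y := by nlinarith
      have h3 : -t ≤ (γ (-(t • x + y)) + γ y) / c := (le_div_iff₀ hc).mpr (by nlinarith)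
      rw [add_div] at h3
      linarith
  have hLT : ∀ t t' : ℝ, t - γ (t • x + y) / c ≤ t' + γ (-(t' • x + y)) / c := by
    intro t t'
    by_cases htt : t ≤ t'
    · have h1 : 0 ≤ γ (t • x + y) / c := div_nonneg (hnn _) hc.le
      have h2 : 0 ≤ γ (-(t' • x + y)) / c := div_nonneg (hnn _) hc.le
      linarith
    · push_neg at htt
      have hd : 0 < t - t' := by linarith
      have hsplit : (t - t') • x = (t • x + y) + (-(t' • x + y)) := by
        rw [sub_smul]; abel
      have h1 : γ ((t - t') • x) ≤ γ (t • x + y) + γ (-(t' • x + y)) := by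
        have := hsub (t • x + y) (-(t' • x + y))
        rw [← hsplit] at this; exact this
      rw [hhom _ _ hd] at h1
      have h2 : (t - t') * c ≤ γ (t • x + y) + γ (-(t' • x + y)) := by nlinarith
      have h3 : t - t' ≤ (γ (t • x + y) + γ (-(t' • x + y))) / c :=
        (le_div_iff₀ hc).mpr (by nlinarith)
      rw [add_div] at h3
      linarith
  set L : Set ℝ := Set.range (fun t : ℝ => t - γ (t • x + y) / c) with hL_def
  set U : Set ℝ := Set.range (fun t : ℝ => t + γ (-(t • x + y)) / c) with hU_def
  have hLne : L.Nonempty := ⟨_, 0, rfl⟩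
  have hUne : U.Nonempty := ⟨_, 0, rfl⟩
  have hLbdd : BddAbove L := ⟨γ (-y) / c, by rintro v ⟨t, rfl⟩; exact hLub t⟩
  have hUbdd : BddBelow U := ⟨-(γ y / c), by rintro v ⟨t, rfl⟩; exact hUlb t⟩
  constructor
  · refine ⟨sSup L, sInf U, ?_, ?_⟩
    · apply csSup_le hLne
      rintro v ⟨t, rfl⟩
      apply le_csInf hUne
      rintro w ⟨t', rfl⟩
      exact hLT t t'
    · ext α
      simp only [Set.mem_setOf_eq, Set.mem_Icc, equiv α]
      constructor
      · rintro ⟨h1, h2⟩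
        exact ⟨csSup_le hLne (by rintro v ⟨t, rfl⟩; exact h1 t),
               le_csInf hUne (by rintro v ⟨t, rfl⟩; exact h2 t)⟩
      · rintro ⟨ha, hb⟩
        exact ⟨fun t => le_trans (le_csSup hLbdd ⟨t, rfl⟩) ha,
               fun t => le_trans hb (csInf_le hUbdd ⟨t, rfl⟩)⟩
  · intro α hα
    obtain ⟨h1, h2⟩ := (equiv α).mp hα
    have hlo := h1 0
    have hhi := h2 0
    simp only [zero_smul, zero_add, zero_sub] at hlo hhi
    refine abs_le.mpr ⟨?_, ?_⟩
    · have := le_max_left (γ y / c) (γ (-y) / c)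
      linarith
    · exact le_trans hhi (le_max_right _ _)
end
end

section
/- Let γ be a gauge on ℝ^d, x, x* ∈ ℝ^d with γ°(x*) = 1 and 0 ≤ ε < γ(x). The following are equivalent: (a) x* ∈ ∂_ε γ(x); (b) ⟨x*, x⟩ ≥ γ(x) − ε; (c) ⟨x*, x⟩ > 0 and x ⊥_B^ε h for all h with ⟨x*, h⟩ = 0; (d) sup{⟨x*, z⟩ : γ(z) ≤ γ(x) − ε} ≤ ⟨x*, x⟩. -/
open scoped RealInnerProductSpace

noncomputable section

variable {d : ℕ}

theorem eps_subgradient_tfae (γ : EuclideanSpace ℝ (Fin d) → ℝ) (hγ : IsGauge γ)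
    (x xs : EuclideanSpace ℝ (Fin d)) (hxs : polarGauge γ xs = 1)
    (ε : ℝ) (hε : 0 ≤ ε) (hεx : ε < γ x) :
    [xs ∈ epsSubdiff γ ε x,
     γ x - ε ≤ ⟪xs, x⟫,
     0 < ⟪xs, x⟫ ∧ ∀ h : EuclideanSpace ℝ (Fin d), ⟪xs, h⟫ = 0 → BirkhoffEps γ ε x h,
     sSup {t : ℝ | ∃ z : EuclideanSpace ℝ (Fin d), γ z ≤ γ x - ε ∧ t = ⟪xs, z⟫} ≤
       ⟪xs, x⟫].TFAE := by
  obtain ⟨hpos, hzero, hhom, hsub⟩ := hγ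
  set S : Set ℝ := {l : ℝ | 0 < l ∧ ∀ z, ⟪xs, z⟫ ≤ l * γ z} with hS
  have hxs' : sInf S = 1 := hxs
  have hSbdd : BddBelow S := ⟨0, fun l hl => le_of_lt hl.1⟩
  have hSne : S.Nonempty := by
    by_contra hc
    rw [Set.not_nonempty_iff_eq_empty] at hc
    rw [hc, Real.sInf_empty] at hxs'
    norm_num at hxs'
  have hγ0 : γ 0 = 0 := by
    have h2 := hhom 0 2 (by norm_num)
    rw [smul_zero] at h2
    linarith
  -- key: inner ≤ gauge
  have hkey : ∀ z, ⟪xs, z⟫ ≤ γ z := by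
    intro z
    by_contra hc
    push_neg at hc
    rcases eq_or_lt_of_le (hpos z) with h0 | hp
    · have hz0 : z = 0 := hzero z h0.symm
      rw [hz0, inner_zero_right] at hc
      linarith [hγ0 ▸ hc]
    · have hb : (1:ℝ) < ⟪xs, z⟫ / γ z := (one_lt_div hp).2 hc
      obtain ⟨l, hlS, hl⟩ := exists_lt_of_csInf_lt hSne (hxs' ▸ hb)
      have h1 := hlS.2 z
      have h2 : l * γ z < (⟪xs, z⟫ / γ z) * γ z := by
        exact mul_lt_mul_of_pos_right hl hp
      rw [div_mul_cancel₀ _ (ne_of_gt hp)] at h2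
      linarith
  -- near attainment
  have hnear : ∀ δ : ℝ, 0 < δ → δ < 1 → ∃ w, γ w = 1 ∧ 1 - δ < ⟪xs, w⟫ := by
    intro δ hδ hδ1
    by_contra hc
    push_neg at hc
    have hmem : (1 - δ) ∈ S := by
      refine ⟨by linarith, fun z => ?_⟩
      rcases eq_or_lt_of_le (hpos z) with h0 | hp
      · have hz0 : z = 0 := hzero z h0.symm
        simp [hz0, inner_zero_right, hγ0]
      · set w := (γ z)⁻¹ • z with hw
        have hγw : γ w = 1 := by
          rw [hw, hhom z (γ z)⁻¹ (inv_pos.2 hp), inv_mul_cancel₀ (ne_of_gt hp)]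
        have h1 := hc w hγw
        rw [hw, real_inner_smul_right] at h1
        have := mul_le_mul_of_nonneg_left h1 (le_of_lt hp)
        rw [← mul_assoc, mul_inv_cancel₀ (ne_of_gt hp), one_mul] at this
        linarith [this]
    have := csInf_le hSbdd hmem
    rw [hxs'] at this
    linarith
  -- limiting lemma
  have hlimit : ∀ A B : ℝ, 0 < A → (∀ δ : ℝ, 0 < δ → δ < 1 → A * (1 - δ) ≤ B) → A ≤ B := by
    intro A B hA hkey
    by_contra hc
    push_neg at hc
    have h12 := hkey (1/2) (by norm_num) (by norm_num)
    have hB : 0 < B := by linarith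
    have hδ : 0 < (A - B) / (2 * A) := div_pos (by linarith) (by linarith)
    have hδ1 : (A - B) / (2 * A) < 1 := by
      rw [div_lt_one (by linarith)]
      linarith
    have h := hkey _ hδ hδ1
    have : A * (1 - (A - B) / (2 * A)) = A - (A - B) / 2 := by
      field_simp
    rw [this] at h
    linarith
  have hA : 0 < γ x - ε := by linarith
  tfae_have 1 → 2 := by
    intro ha
    have h0 := ha 0
    rw [zero_sub, inner_neg_right, hγ0] at h0
    linarith
  tfae_have 2 → 1 := by
    intro hb y
    rw [inner_sub_right]
    have := hkey y
    linarith
  tfae_have 2 → 3 := by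
    intro hb
    refine ⟨by linarith, fun h hh l => ?_⟩
    have h1 := hkey (x + l • h)
    rw [inner_add_right, real_inner_smul_right, hh, mul_zero, add_zero] at h1
    linarith
  tfae_have 3 → 2 := by
    intro ⟨hxx, hB⟩
    refine hlimit _ _ hA (fun δ hδ hδ1 => ?_)
    obtain ⟨w, hγw, hw⟩ := hnear δ hδ hδ1
    have hwpos : 0 < ⟪xs, w⟫ := by linarith
    set c : ℝ := ⟪xs, x⟫ / ⟪xs, w⟫ with hcdef
    have hcpos : 0 < c := div_pos hxx hwpos
    have hceq : c * ⟪xs, w⟫ = ⟪xs, x⟫ := div_mul_cancel₀ _ (ne_of_gt hwpos)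
    have hh : ⟪xs, x - c • w⟫ = 0 := by
      rw [inner_sub_right, real_inner_smul_right]
      linarith
    have hbirk := hB (x - c • w) hh (-1)
    have heq : x + (-1 : ℝ) • (x - c • w) = c • w := by
      simp [smul_sub]
    rw [heq, hhom w c hcpos, hγw, mul_one] at hbirk
    -- γ x ≤ c + ε ; c * ⟪xs,w⟫ = ⟪xs,x⟫ ; 1 - δ < ⟪xs,w⟫ ; so (γx-ε)(1-δ) ≤ c(1-δ) ≤ c⟪xs,w⟫
    nlinarith [mul_le_mul_of_nonneg_right (show γ x - ε ≤ c by linarith) (by linarith : (0:ℝ) ≤ 1 - δ),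
      mul_lt_mul_of_pos_left hw hcpos]
  tfae_have 2 → 4 := by
    intro hb
    apply Real.sSup_le
    · rintro t ⟨z, hz1, rfl⟩
      have := hkey z
      linarith
    · linarith
  tfae_have 4 → 2 := by
    intro hd
    refine hlimit _ _ hA (fun δ hδ hδ1 => ?_)
    obtain ⟨w, hγw, hw⟩ := hnear δ hδ hδ1
    set z := (γ x - ε) • w with hzdef
    have hγz : γ z = γ x - ε := by
      rw [hzdef, hhom w _ hA, hγw, mul_one]
    have hbdd : BddAbove {t : ℝ | ∃ z : EuclideanSpace ℝ (Fin d), γ z ≤ γ x - ε ∧ t = ⟪xs, z⟫} := by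
      refine ⟨γ x - ε, ?_⟩
      rintro t ⟨u, hu1, rfl⟩
      exact le_trans (hkey u) hu1
    have hmem : ⟪xs, z⟫ ∈ {t : ℝ | ∃ z : EuclideanSpace ℝ (Fin d), γ z ≤ γ x - ε ∧ t = ⟪xs, z⟫} :=
      ⟨z, le_of_eq hγz, rfl⟩
    have hle := le_csSup hbdd hmem
    have hinz : ⟪xs, z⟫ = (γ x - ε) * ⟪xs, w⟫ := by
      rw [hzdef, real_inner_smul_right]
    nlinarith [mul_lt_mul_of_pos_left hw hA]
  tfae_finish
end
end

section
/- Let γ be a gauge on ℝ^d, x, x* ∈ ℝ^d with x* ≠ 0. The following are equivalent: (a) x*/γ°(x*) ∈ ∂γ(x); (b) ⟨x*, x⟩ = γ°(x*) γ(x); (c) ⟨x*, x⟩ ≥ 0 and x ⊥_B h for all h with ⟨x*, h⟩ = 0; (d) the linear functional ⟨x*, ·⟩ attains its maximum over the ball {z : γ(z) ≤ γ(x)} at x. -/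
open scoped RealInnerProductSpace

noncomputable section

variable {d : ℕ}

theorem subgradient_tfae_zero (γ : EuclideanSpace ℝ (Fin d) → ℝ) (hγ : IsGauge γ)
    (x xs : EuclideanSpace ℝ (Fin d)) (hxs : xs ≠ 0) :
    [(polarGauge γ xs)⁻¹ • xs ∈ epsSubdiff γ 0 x,
     ⟪xs, x⟫ = polarGauge γ xs * γ x,
     0 ≤ ⟪xs, x⟫ ∧ ∀ h : EuclideanSpace ℝ (Fin d), ⟪xs, h⟫ = 0 → BirkhoffEps γ 0 x h,
     ∀ z : EuclideanSpace ℝ (Fin d), γ z ≤ γ x → ⟪xs, z⟫ ≤ ⟪xs, x⟫].TFAE := by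
  obtain ⟨hnn, hzero, hhom, hsub⟩ := hγ
  -- basic facts
  have hγ0 : γ 0 = 0 := by
    have h2 := hhom 0 2 (by norm_num)
    rw [smul_zero] at h2; linarith
  have hpos : ∀ y : EuclideanSpace ℝ (Fin d), y ≠ 0 → 0 < γ y := fun y hy =>
    (hnn y).lt_of_ne (fun h => hy (hzero y h.symm))
  -- convexity and continuity
  have hconv : ConvexOn ℝ Set.univ γ := by
    refine ⟨convex_univ, fun p _ q _ a b ha hb hab => ?_⟩
    rcases ha.eq_or_lt with rfl | ha'
    · simp only [zero_add] at hab
      simp [hab]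
    · rcases hb.eq_or_lt with rfl | hb'
      · simp only [add_zero] at hab
        simp [hab]
      · calc γ (a • p + b • q) ≤ γ (a • p) + γ (b • q) := hsub _ _
          _ = a * γ p + b * γ q := by rw [hhom p a ha', hhom q b hb']
  have hcont : Continuous γ := hconv.locallyLipschitz.continuous
  -- lower bound: ∃ m > 0, m * ‖y‖ ≤ γ y
  have hlow : ∃ m > (0:ℝ), ∀ y : EuclideanSpace ℝ (Fin d), m * ‖y‖ ≤ γ y := by
    by_cases hS : (Metric.sphere (0 : EuclideanSpace ℝ (Fin d)) 1).Nonempty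
    · obtain ⟨u, hu, humin⟩ := (isCompact_sphere (0 : EuclideanSpace ℝ (Fin d)) 1).exists_isMinOn
        hS hcont.continuousOn
      have hu1 : ‖u‖ = 1 := by simpa using hu
      have hu0 : u ≠ 0 := fun h => by simp [h] at hu1
      refine ⟨γ u, hpos u hu0, fun y => ?_⟩
      by_cases hy : y = 0
      · simp [hy, hγ0]
      · have hny : 0 < ‖y‖ := norm_pos_iff.mpr hy
        have hmem : (‖y‖⁻¹ • y) ∈ Metric.sphere (0 : EuclideanSpace ℝ (Fin d)) 1 := by
          simp [norm_smul, abs_of_pos (inv_pos.mpr hny), inv_mul_cancel₀ hny.ne']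
        have h1 : γ u ≤ γ (‖y‖⁻¹ • y) := humin hmem
        have h2 : γ (‖y‖⁻¹ • y) = ‖y‖⁻¹ * γ y := hhom y _ (inv_pos.mpr hny)
        rw [h2] at h1
        calc γ u * ‖y‖ ≤ (‖y‖⁻¹ * γ y) * ‖y‖ := by nlinarith
          _ = γ y := by field_simp
    · refine ⟨1, one_pos, fun y => ?_⟩
      have hy : y = 0 := by
        by_contra hy
        exact hS ⟨‖y‖⁻¹ • y, by
          simp [norm_smul, abs_of_pos (inv_pos.mpr (norm_pos_iff.mpr hy)),
            inv_mul_cancel₀ (norm_pos_iff.mpr hy).ne']⟩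
      simp [hy, hγ0]
  obtain ⟨m, hm, hmle⟩ := hlow
  -- the sublevel set K = {z | γ z ≤ 1} is compact
  have hKc : IsCompact {z : EuclideanSpace ℝ (Fin d) | γ z ≤ 1} := by
    refine Metric.isCompact_of_isClosed_isBounded
      (isClosed_le hcont continuous_const) ?_
    refine (Metric.isBounded_iff_subset_closedBall 0).mpr ⟨m⁻¹, fun z hz => ?_⟩
    have h1 : m * ‖z‖ ≤ 1 := le_trans (hmle z) hz
    have h2 := mul_le_mul_of_nonneg_left h1 (inv_pos.mpr hm).le
    simp only [Metric.mem_closedBall, dist_zero_right]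
    calc ‖z‖ = m⁻¹ * (m * ‖z‖) := by field_simp
      _ ≤ m⁻¹ * 1 := h2
      _ = m⁻¹ := mul_one _
  -- maximizer of ⟪xs, ·⟫ on K
  have hinner : Continuous fun z : EuclideanSpace ℝ (Fin d) => ⟪xs, z⟫ :=
    continuous_const.inner continuous_id
  obtain ⟨z₀, hz₀K, hz₀max⟩ := hKc.exists_isMaxOn ⟨0, by simp [hγ0]⟩ hinner.continuousOn
  set M : ℝ := ⟪xs, z₀⟫ with hM
  have hγxs : 0 < γ xs := hpos xs hxs
  have hMpos : 0 < M := by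
    have hw : ((γ xs)⁻¹ • xs) ∈ {z : EuclideanSpace ℝ (Fin d) | γ z ≤ 1} := by
      simp only [Set.mem_setOf_eq, hhom xs _ (inv_pos.mpr hγxs),
        inv_mul_cancel₀ hγxs.ne', le_refl]
    have h1 : ⟪xs, (γ xs)⁻¹ • xs⟫ ≤ M := hz₀max hw
    have h2 : ⟪xs, (γ xs)⁻¹ • xs⟫ = (γ xs)⁻¹ * ‖xs‖ ^ 2 := by
      rw [real_inner_smul_right, real_inner_self_eq_norm_sq]
    have h3 : 0 < (γ xs)⁻¹ * ‖xs‖ ^ 2 := by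
      have : 0 < ‖xs‖ := norm_pos_iff.mpr hxs
      positivity
    linarith [h2 ▸ h1]
  -- the defining set of the polar equals Ici M
  have hSet : {l : ℝ | 0 < l ∧ ∀ y, ⟪xs, y⟫ ≤ l * γ y} = Set.Ici M := by
    ext l
    simp only [Set.mem_setOf_eq, Set.mem_Ici]
    constructor
    · rintro ⟨hl, hly⟩
      calc M = ⟪xs, z₀⟫ := rfl
        _ ≤ l * γ z₀ := hly z₀
        _ ≤ l * 1 := mul_le_mul_of_nonneg_left hz₀K hl.le
        _ = l := mul_one _
    · intro hMl
      refine ⟨lt_of_lt_of_le hMpos hMl, fun y => ?_⟩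
      by_cases hy : y = 0
      · simp [hy, hγ0]
      · have hγy : 0 < γ y := hpos y hy
        have hw : ((γ y)⁻¹ • y) ∈ {z : EuclideanSpace ℝ (Fin d) | γ z ≤ 1} := by
          simp only [Set.mem_setOf_eq, hhom y _ (inv_pos.mpr hγy),
            inv_mul_cancel₀ hγy.ne', le_refl]
        have h1 : ⟪xs, (γ y)⁻¹ • y⟫ ≤ M := hz₀max hw
        rw [real_inner_smul_right] at h1
        have h2 : (γ y)⁻¹ * ⟪xs, y⟫ ≤ l := le_trans h1 hMl
        calc ⟪xs, y⟫ = γ y * ((γ y)⁻¹ * ⟪xs, y⟫) := by field_simp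
          _ ≤ γ y * l := mul_le_mul_of_nonneg_left h2 hγy.le
          _ = l * γ y := mul_comm _ _
  have hpolar : polarGauge γ xs = M := by
    rw [polarGauge, hSet, csInf_Ici]
  set p : ℝ := polarGauge γ xs with hpdef
  have hp : 0 < p := hpolar ▸ hMpos
  have hple : ∀ y : EuclideanSpace ℝ (Fin d), ⟪xs, y⟫ ≤ p * γ y := by
    intro y
    have : M ∈ Set.Ici M := Set.self_mem_Ici
    rw [← hSet] at this
    exact hpolar ▸ this.2 y
  have hz₀p : ⟪xs, z₀⟫ = p := hpolar.symm
  tfae_have 1 → 2 := by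
    intro h
    have h0 := h 0
    rw [zero_sub, inner_neg_right, real_inner_smul_left, hγ0, zero_sub] at h0
    -- -(p⁻¹ * ⟪xs,x⟫) ≤ -γ x + 0
    have h1 : γ x ≤ p⁻¹ * ⟪xs, x⟫ := by linarith
    have h2 : p * γ x ≤ ⟪xs, x⟫ := by
      have := mul_le_mul_of_nonneg_left h1 hp.le
      calc p * γ x ≤ p * (p⁻¹ * ⟪xs, x⟫) := this
        _ = ⟪xs, x⟫ := by field_simp
    exact le_antisymm (hple x) h2
  tfae_have 2 → 1 := by
    intro h y
    rw [inner_sub_right, real_inner_smul_left, real_inner_smul_left, h]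
    have h1 : p⁻¹ * ⟪xs, y⟫ ≤ γ y := by
      have := mul_le_mul_of_nonneg_left (hple y) (inv_pos.mpr hp).le
      calc p⁻¹ * ⟪xs, y⟫ ≤ p⁻¹ * (p * γ y) := this
        _ = γ y := by field_simp
    have h2 : p⁻¹ * (p * γ x) = γ x := by field_simp
    linarith
  tfae_have 2 → 4 := by
    intro h z hz
    calc ⟪xs, z⟫ ≤ p * γ z := hple z
      _ ≤ p * γ x := mul_le_mul_of_nonneg_left hz hp.le
      _ = ⟪xs, x⟫ := h.symm
  tfae_have 4 → 2 := by
    intro h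
    refine le_antisymm (hple x) ?_
    by_cases hx : γ x = 0
    · have hx0 : x = 0 := hzero x hx
      simp [hx0, hγ0]
    · have hγx : 0 < γ x := (hnn x).lt_of_ne (Ne.symm hx)
      have hzmem : γ (γ x • z₀) ≤ γ x := by
        rw [hhom z₀ _ hγx]
        calc γ x * γ z₀ ≤ γ x * 1 := mul_le_mul_of_nonneg_left hz₀K hγx.le
          _ = γ x := mul_one _
      have h1 : ⟪xs, γ x • z₀⟫ ≤ ⟪xs, x⟫ := h _ hzmem
      rw [real_inner_smul_right, hz₀p] at h1
      linarith [h1]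
  tfae_have 2 → 3 := by
    intro h
    refine ⟨h ▸ mul_nonneg hp.le (hnn x), fun v hv l => ?_⟩
    have h1 : ⟪xs, x + l • v⟫ ≤ p * γ (x + l • v) := hple _
    rw [inner_add_right, real_inner_smul_right, hv, mul_zero, add_zero, h] at h1
    have := mul_le_mul_of_nonneg_left h1 (inv_pos.mpr hp).le
    have h2 : p⁻¹ * (p * γ x) = γ x := by field_simp
    have h3 : p⁻¹ * (p * γ (x + l • v)) = γ (x + l • v) := by field_simp
    linarith
  tfae_have 3 → 2 := by
    rintro ⟨hnn', hB⟩
    refine le_antisymm (hple x) ?_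
    set c : ℝ := ⟪xs, x⟫ with hc
    have hv : ⟪xs, x - (c / p) • z₀⟫ = 0 := by
      rw [inner_sub_right, real_inner_smul_right, hz₀p, div_mul_cancel₀ _ hp.ne',
        ← hc, sub_self]
    have hBx := hB _ hv (-1)
    have heq : x + (-1 : ℝ) • (x - (c / p) • z₀) = (c / p) • z₀ := by
      module
    rw [heq, add_zero] at hBx
    rcases hnn'.lt_or_eq with hcpos | hceq
    · have hcp : 0 < c / p := div_pos hcpos hp
      have h1 : γ ((c / p) • z₀) = (c / p) * γ z₀ := hhom z₀ _ hcp
      have h2 : γ x ≤ (c / p) * γ z₀ := h1 ▸ hBx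
      have h3 : γ x ≤ c / p := by
        calc γ x ≤ (c / p) * γ z₀ := h2
          _ ≤ (c / p) * 1 := mul_le_mul_of_nonneg_left hz₀K hcp.le
          _ = c / p := mul_one _
      calc p * γ x ≤ p * (c / p) := mul_le_mul_of_nonneg_left h3 hp.le
        _ = c := by field_simp
    · have hc0 : c = 0 := hceq.symm
      rw [hc0, zero_div, zero_smul, hγ0] at hBx
      have : γ x = 0 := le_antisymm hBx (hnn x)
      rw [hc0, this, mul_zero]
  tfae_finish
end
end

section
/- Let γ be a gauge on ℝ^d, U ⊂ ℝ^d a non-trivial linear subspace, y ∉ U, x ∈ U, ε ≥ 0. The following are equivalent: (a) x is an ε-best approximation of y in U, i.e., γ(x−y) ≤ γ(z−y) + ε for all z ∈ U; (b) (x−y) ⊥_B^ε z for all z ∈ U; (c) there exists x* with γ°(x*) = 1, ⟨x*, u⟩ = 0 for all u ∈ U, and x* ∈ ∂_ε γ(x−y). Moreover the set of ε-best approximations of y in U is non-empty, closed, and convex. -/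
open scoped RealInnerProductSpace

noncomputable section

variable {d : ℕ}

namespace IsGauge

variable {γ : EuclideanSpace ℝ (Fin d) → ℝ}

lemma zero' (hγ : IsGauge γ) : γ 0 = 0 := by
  have h := hγ.2.2.1 0 2 (by norm_num)
  simp only [smul_zero] at h
  linarith

lemma smul_nn (hγ : IsGauge γ) {a : ℝ} (ha : 0 ≤ a) (v : EuclideanSpace ℝ (Fin d)) : γ (a • v) = a * γ v := by
  rcases ha.lt_or_eq with h | h
  · exact hγ.2.2.1 v a h
  · simp [← h, hγ.zero']

lemma pos (hγ : IsGauge γ) {v : EuclideanSpace ℝ (Fin d)} (hv : v ≠ 0) : 0 < γ v :=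
  (hγ.1 v).lt_of_ne (fun h => hv (hγ.2.1 v h.symm))

lemma convexOn (hγ : IsGauge γ) : ConvexOn ℝ Set.univ γ := by
  refine ⟨convex_univ, fun p _ q _ a b ha hb hab => ?_⟩
  calc γ (a • p + b • q) ≤ γ (a • p) + γ (b • q) := hγ.2.2.2 _ _
    _ = a * γ p + b * γ q := by rw [hγ.smul_nn ha, hγ.smul_nn hb]

lemma continuous (hγ : IsGauge γ) : Continuous γ := by
  have := hγ.convexOn.continuousOn isOpen_univ
  rw [← continuousOn_univ]
  exact this

lemma norm_bound (hγ : IsGauge γ) (hnt : ∃ v : EuclideanSpace ℝ (Fin d), v ≠ 0) :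
    ∃ m > 0, ∀ v, m * ‖v‖ ≤ γ v := by
  obtain ⟨v₀, hv₀⟩ := hnt
  have hsne : (Metric.sphere (0 : EuclideanSpace ℝ (Fin d)) 1).Nonempty := by
    refine ⟨‖v₀‖⁻¹ • v₀, ?_⟩
    simp [norm_smul, norm_ne_zero_iff.mpr hv₀, inv_mul_cancel₀]
  obtain ⟨w₀, hw₀s, hw₀min⟩ := (isCompact_sphere (0 : EuclideanSpace ℝ (Fin d)) 1).exists_isMinOn
    hsne hγ.continuous.continuousOn
  have hw₀ : w₀ ≠ 0 := by
    intro h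
    simp [h] at hw₀s
  refine ⟨γ w₀, hγ.pos hw₀, fun v => ?_⟩
  rcases eq_or_ne v 0 with rfl | hv
  · simp [hγ.zero']
  · have hnv : (0:ℝ) < ‖v‖ := norm_pos_iff.mpr hv
    have hmem : ‖v‖⁻¹ • v ∈ Metric.sphere (0 : EuclideanSpace ℝ (Fin d)) 1 := by
      simp [norm_smul, inv_mul_cancel₀ hnv.ne']
    have := hw₀min hmem
    have hcalc : γ v = ‖v‖ * γ (‖v‖⁻¹ • v) := by
      rw [← hγ.smul_nn hnv.le, smul_smul, mul_inv_cancel₀ hnv.ne', one_smul]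
    rw [hcalc, mul_comm (γ w₀)]
    exact mul_le_mul_of_nonneg_left this hnv.le

lemma exists_min (hγ : IsGauge γ) (U : Submodule ℝ (EuclideanSpace ℝ (Fin d))) (hU : U ≠ ⊥)
    (y : EuclideanSpace ℝ (Fin d)) :
    ∃ z₀ ∈ U, ∀ z ∈ U, γ (z₀ - y) ≤ γ (z - y) := by
  obtain ⟨v₀, hv₀U, hv₀⟩ := Submodule.exists_mem_ne_zero_of_ne_bot hU
  obtain ⟨m, hm, hmb⟩ := hγ.norm_bound ⟨v₀, hv₀⟩
  set c := γ (0 - y) with hc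
  set K : Set (EuclideanSpace ℝ (Fin d)) := (U : Set _) ∩ {z | γ (z - y) ≤ c} with hK
  have hcont : Continuous fun z : EuclideanSpace ℝ (Fin d) => γ (z - y) :=
    hγ.continuous.comp (continuous_id.sub continuous_const)
  have hKc : IsClosed K :=
    (Submodule.closed_of_finiteDimensional U).inter (isClosed_le hcont continuous_const)
  have hKb : Bornology.IsBounded K := by
    rw [isBounded_iff_forall_norm_le]
    refine ⟨c / m + ‖y‖, fun z hz => ?_⟩
    have h1 : m * ‖z - y‖ ≤ c := (hmb (z - y)).trans hz.2
    have h2 : ‖z - y‖ ≤ c / m := (le_div_iff₀ hm).mpr (by linarith [h1, mul_comm m ‖z - y‖])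
    calc ‖z‖ = ‖z - y + y‖ := by rw [sub_add_cancel]
      _ ≤ ‖z - y‖ + ‖y‖ := norm_add_le _ _
      _ ≤ c / m + ‖y‖ := by linarith
  have hKne : K.Nonempty := ⟨0, U.zero_mem, le_refl c⟩
  obtain ⟨z₀, hz₀K, hz₀min⟩ := (Metric.isCompact_of_isClosed_isBounded hKc hKb).exists_isMinOn
    hKne hcont.continuousOn
  refine ⟨z₀, hz₀K.1, fun z hz => ?_⟩
  by_cases h : γ (z - y) ≤ c
  · exact hz₀min ⟨hz, h⟩
  · exact (hz₀min ⟨U.zero_mem, le_refl c⟩).trans (le_of_not_ge h)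

lemma exists_dual (hγ : IsGauge γ) (U : Submodule ℝ (EuclideanSpace ℝ (Fin d))) (hU : U ≠ ⊥)
    (y : EuclideanSpace ℝ (Fin d)) (hy : y ∉ U) (x : EuclideanSpace ℝ (Fin d)) (hx : x ∈ U)
    (ε : ℝ) (ha : ∀ z ∈ U, γ (x - y) ≤ γ (z - y) + ε) :
    ∃ xs : EuclideanSpace ℝ (Fin d), polarGauge γ xs = 1 ∧
      (∀ u ∈ U, ⟪xs, u⟫ = 0) ∧ xs ∈ epsSubdiff γ ε (x - y) := by
  classical
  set N : EuclideanSpace ℝ (Fin d) → ℝ :=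
    fun v => sInf ((fun u => γ (v + u)) '' (U : Set (EuclideanSpace ℝ (Fin d)))) with hN
  have hbdd : ∀ v, BddBelow ((fun u => γ (v + u)) '' (U : Set (EuclideanSpace ℝ (Fin d)))) :=
    fun v => ⟨0, by rintro r ⟨u, hu, rfl⟩; exact hγ.1 _⟩
  have hne : ∀ v, ((fun u => γ (v + u)) '' (U : Set (EuclideanSpace ℝ (Fin d)))).Nonempty :=
    fun v => ⟨γ (v + 0), 0, U.zero_mem, rfl⟩
  have hNle : ∀ v, ∀ u ∈ U, N v ≤ γ (v + u) := fun v u hu => csInf_le (hbdd v) ⟨u, hu, rfl⟩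
  have hleN : ∀ (v : EuclideanSpace ℝ (Fin d)) (c : ℝ), (∀ u ∈ U, c ≤ γ (v + u)) → c ≤ N v :=
    fun v c h => le_csInf (hne v) (by rintro r ⟨u, hu, rfl⟩; exact h u hu)
  have hN0 : ∀ v, 0 ≤ N v := fun v => hleN v 0 fun u _ => hγ.1 _
  have hNγ : ∀ v, N v ≤ γ v := fun v => by simpa using hNle v 0 U.zero_mem
  have hNU : ∀ u ∈ U, N u ≤ 0 := by
    intro u hu
    have := hNle u (-u) (U.neg_mem hu)
    simpa [hγ.zero'] using this
  have hNsmul_le : ∀ c : ℝ, 0 < c → ∀ v, N (c • v) ≤ c * N v := by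
    intro c hc v
    have h1 : ∀ u ∈ U, c⁻¹ * N (c • v) ≤ γ (v + u) := by
      intro u hu
      have h2 := hNle (c • v) (c • u) (U.smul_mem c hu)
      rw [← smul_add, hγ.2.2.1 _ c hc] at h2
      have h3 : c⁻¹ * N (c • v) ≤ c⁻¹ * (c * γ (v + u)) :=
        mul_le_mul_of_nonneg_left h2 (inv_nonneg.mpr hc.le)
      rwa [← mul_assoc, inv_mul_cancel₀ hc.ne', one_mul] at h3
    have h2 := hleN v _ h1
    calc N (c • v) = c * (c⁻¹ * N (c • v)) := by
          rw [← mul_assoc, mul_inv_cancel₀ hc.ne', one_mul]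
      _ ≤ c * N v := mul_le_mul_of_nonneg_left h2 hc.le
  have hNsmul : ∀ c : ℝ, 0 < c → ∀ v, N (c • v) = c * N v := by
    intro c hc v
    refine le_antisymm (hNsmul_le c hc v) ?_
    have h := hNsmul_le c⁻¹ (inv_pos.mpr hc) (c • v)
    rw [smul_smul, inv_mul_cancel₀ hc.ne', one_smul] at h
    have h2 : c * N v ≤ c * (c⁻¹ * N (c • v)) := mul_le_mul_of_nonneg_left h hc.le
    rwa [← mul_assoc, mul_inv_cancel₀ hc.ne', one_mul] at h2
  have hNadd : ∀ a b, N (a + b) ≤ N a + N b := by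
    intro a b
    have key : ∀ u₂ ∈ U, N (a + b) - N a ≤ γ (b + u₂) := by
      intro u₂ hu₂
      have key2 : N (a + b) - γ (b + u₂) ≤ N a := by
        apply hleN
        intro u₁ hu₁
        have h1 := hNle (a + b) (u₁ + u₂) (U.add_mem hu₁ hu₂)
        have h2 := hγ.2.2.2 (a + u₁) (b + u₂)
        have h3 : a + b + (u₁ + u₂) = a + u₁ + (b + u₂) := by abel
        rw [h3] at h1
        linarith
      linarith
    have := hleN b _ key
    linarith
  have hy0 : y ≠ 0 := fun h => hy (h ▸ U.zero_mem)
  set α : ℝ := N (-y) with hα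
  set f : EuclideanSpace ℝ (Fin d) →ₗ.[ℝ] ℝ := LinearPMap.mkSpanSingleton y (-α) hy0 with hf
  have hfle : ∀ w : f.domain, f w ≤ N w := by
    rintro ⟨w, hw⟩
    have hw' : w ∈ Submodule.span ℝ {y} := hw
    obtain ⟨c, hc⟩ := Submodule.mem_span_singleton.mp hw'
    have happ : f ⟨w, hw⟩ = c • (-α) := by
      subst hc
      exact LinearPMap.mkSpanSingleton'_apply _ _ _ c _
    rw [happ]
    rcases lt_trichotomy c 0 with h | h | h
    · have hcy : c • y = (-c) • (-y) := by simp
      have : N w = (-c) * α := by rw [← hc, hcy, hNsmul (-c) (by linarith) (-y)]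
      rw [this, smul_eq_mul]
      exact le_of_eq (by ring)
    · subst h
      simp only [zero_smul, smul_eq_mul, zero_mul]
      exact hN0 _
    · have h1 : (0:ℝ) ≤ c * α := mul_nonneg h.le (hN0 _)
      have h2 : c • (-α) = -(c * α) := by rw [smul_eq_mul, mul_neg]
      rw [h2]
      exact le_trans (by linarith) (hN0 _)
  obtain ⟨g, hg_eq, hg_le⟩ := exists_extension_of_le_sublinear f N hNsmul hNadd hfle
  have gγ : ∀ v, g v ≤ γ v := fun v => (hg_le v).trans (hNγ v)
  have gU : ∀ u ∈ U, g u = 0 := by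
    intro u hu
    refine le_antisymm ((hg_le u).trans (hNU u hu)) ?_
    have h1 := (hg_le (-u)).trans (hNU (-u) (U.neg_mem hu))
    rw [map_neg] at h1
    linarith
  have gy : g y = -α := by
    have h1 := hg_eq ⟨y, Submodule.mem_span_singleton_self y⟩
    exact h1.trans (LinearPMap.mkSpanSingleton_apply ℝ ℝ hy0 (-α))
  obtain ⟨z₀, hz₀U, hz₀min⟩ := hγ.exists_min U hU y
  have hαeq : α = γ (z₀ - y) := by
    refine le_antisymm ?_ ?_
    · have := hNle (-y) z₀ hz₀U
      rwa [neg_add_eq_sub] at this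
    · apply hleN
      intro u hu
      have := hz₀min u hu
      rw [neg_add_eq_sub]
      exact this
  have hαpos : 0 < α := by
    rw [hαeq]
    exact hγ.pos (sub_ne_zero.mpr (fun h => hy (h ▸ hz₀U)))
  have hαge : γ (x - y) - ε ≤ α := by
    have := ha z₀ hz₀U
    rw [← hαeq] at this
    linarith
  set xs : EuclideanSpace ℝ (Fin d) :=
    (InnerProductSpace.toDual ℝ (EuclideanSpace ℝ (Fin d))).symm
      (LinearMap.toContinuousLinearMap g) with hxsd
  have hxs : ∀ w, ⟪xs, w⟫ = g w := by
    intro w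
    rw [hxsd, InnerProductSpace.toDual_symm_apply]
    rfl
  refine ⟨xs, ?_, fun u hu => by rw [hxs]; exact gU u hu, ?_⟩
  · unfold polarGauge
    refine le_antisymm (csInf_le ⟨0, fun l hl => hl.1.le⟩
      ⟨one_pos, fun v => by rw [hxs, one_mul]; exact gγ v⟩) ?_
    refine le_csInf ⟨1, one_pos, fun v => by rw [hxs, one_mul]; exact gγ v⟩ ?_
    rintro l ⟨hl, hlv⟩
    have key : l⁻¹ * α ≤ α := by
      rw [hα]
      apply hleN
      intro u hu
      have h1 := hlv (-y + u)
      rw [hxs] at h1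
      have h2 : g (-y + u) = α := by
        rw [map_add, map_neg, gy, gU u hu]
        ring
      rw [h2] at h1
      have h3 : l⁻¹ * α ≤ l⁻¹ * (l * γ (-y + u)) :=
        mul_le_mul_of_nonneg_left h1 (inv_nonneg.mpr hl.le)
      rwa [← mul_assoc, inv_mul_cancel₀ hl.ne', one_mul] at h3
    nlinarith [mul_le_mul_of_nonneg_left key hl.le,
      mul_inv_cancel₀ hl.ne']
  · intro w
    rw [hxs]
    have h1 : g (w - (x - y)) = g w - α := by
      rw [map_sub, map_sub, gU x hx, gy]
      ring
    rw [h1]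
    have := gγ w
    linarith


end IsGauge

theorem best_approximation_characterization (γ : EuclideanSpace ℝ (Fin d) → ℝ)
    (hγ : IsGauge γ) (U : Submodule ℝ (EuclideanSpace ℝ (Fin d))) (hU : U ≠ ⊥)
    (y : EuclideanSpace ℝ (Fin d)) (hy : y ∉ U)
    (x : EuclideanSpace ℝ (Fin d)) (hx : x ∈ U) (ε : ℝ) (hε : 0 ≤ ε) :
    ((∀ z ∈ U, γ (x - y) ≤ γ (z - y) + ε) ↔ ∀ z ∈ U, BirkhoffEps γ ε (x - y) z) ∧
    ((∀ z ∈ U, γ (x - y) ≤ γ (z - y) + ε) ↔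
      ∃ xs : EuclideanSpace ℝ (Fin d), polarGauge γ xs = 1 ∧
        (∀ u ∈ U, ⟪xs, u⟫ = 0) ∧ xs ∈ epsSubdiff γ ε (x - y)) ∧
    ({p : EuclideanSpace ℝ (Fin d) | p ∈ U ∧ ∀ z ∈ U, γ (p - y) ≤ γ (z - y) + ε}.Nonempty ∧
     IsClosed {p : EuclideanSpace ℝ (Fin d) | p ∈ U ∧ ∀ z ∈ U, γ (p - y) ≤ γ (z - y) + ε} ∧
     Convex ℝ {p : EuclideanSpace ℝ (Fin d) | p ∈ U ∧ ∀ z ∈ U, γ (p - y) ≤ γ (z - y) + ε}) := by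
  refine ⟨?_, ⟨fun h => hγ.exists_dual U hU y hy x hx ε h, ?_⟩, ?_, ?_, ?_⟩
  · constructor
    · intro h z hz l
      have h1 := h (x + l • z) (U.add_mem hx (U.smul_mem l hz))
      rwa [show x + l • z - y = x - y + l • z by abel] at h1
    · intro h z hz
      have h1 := h (z - x) (U.sub_mem hz hx) 1
      rwa [one_smul, show x - y + (z - x) = z - y by abel] at h1
  · rintro ⟨xs, hpol, horth, hsub⟩ z hz
    have h1 := hsub (z - y)
    rw [show z - y - (x - y) = z - x by abel, horth (z - x) (U.sub_mem hz hx)] at h1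
    linarith
  · obtain ⟨z₀, hz₀U, hz₀min⟩ := hγ.exists_min U hU y
    exact ⟨z₀, hz₀U, fun z hz => (hz₀min z hz).trans (by linarith)⟩
  · have hset : {p : EuclideanSpace ℝ (Fin d) | p ∈ U ∧ ∀ z ∈ U, γ (p - y) ≤ γ (z - y) + ε} =
        (U : Set (EuclideanSpace ℝ (Fin d))) ∩ ⋂ z ∈ U, {p | γ (p - y) ≤ γ (z - y) + ε} := by
      ext p
      simp [Set.mem_iInter]
    rw [hset]
    exact (Submodule.closed_of_finiteDimensional U).inter
      (isClosed_biInter fun z _ => isClosed_le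
        (hγ.continuous.comp (continuous_id.sub continuous_const)) continuous_const)
  · intro p hp q hq a b ha hb hab
    refine ⟨U.add_mem (U.smul_mem a hp.1) (U.smul_mem b hq.1), fun z hz => ?_⟩
    have hy' : a • y + b • y = y := by rw [← add_smul, hab, one_smul]
    have hcomb : a • p + b • q - y = a • (p - y) + b • (q - y) := by
      calc a • p + b • q - y = a • p + b • q - (a • y + b • y) := by rw [hy']
        _ = a • (p - y) + b • (q - y) := by rw [smul_sub, smul_sub]; abel
    calc γ (a • p + b • q - y) = γ (a • (p - y) + b • (q - y)) := by rw [hcomb]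
      _ ≤ γ (a • (p - y)) + γ (b • (q - y)) := hγ.2.2.2 _ _
      _ = a * γ (p - y) + b * γ (q - y) := by rw [hγ.smul_nn ha, hγ.smul_nn hb]
      _ ≤ a * (γ (z - y) + ε) + b * (γ (z - y) + ε) :=
          add_le_add (mul_le_mul_of_nonneg_left (hp.2 z hz) ha)
            (mul_le_mul_of_nonneg_left (hq.2 z hz) hb)
      _ = γ (z - y) + ε := by rw [← add_mul, hab, one_mul]
end
end

section
/- Let γ be a gauge on ℝ^d (d ≥ 2). The gauge γ is Gâteaux differentiable on ℝ^d \ {0} if and only if Birkhoff orthogonality is right additive, i.e., for all x, y, z ∈ ℝ^d, x ⊥_B y and x ⊥_B z imply x ⊥_B (y + z). -/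
open scoped RealInnerProductSpace

noncomputable section

variable {d : ℕ}

/-- Gâteaux differentiability of γ at x: the one-sided directional derivative
exists and is linear in the direction. -/
def GateauxDiffAt (γ : EuclideanSpace ℝ (Fin d) → ℝ) (x : EuclideanSpace ℝ (Fin d)) : Prop :=
  ∃ L : EuclideanSpace ℝ (Fin d) →ₗ[ℝ] ℝ, ∀ y,
    Filter.Tendsto (fun l : ℝ => (γ (x + l • y) - γ x) / l)
      (nhdsWithin 0 (Set.Ioi 0)) (nhds (L y))

namespace GaugeAux
variable {γ : EuclideanSpace ℝ (Fin d) → ℝ}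


variable {d : ℕ}


variable {γ : EuclideanSpace ℝ (Fin d) → ℝ}

/-- Difference quotient. -/
def Q (γ : EuclideanSpace ℝ (Fin d) → ℝ) (x y : EuclideanSpace ℝ (Fin d)) (l : ℝ) : ℝ :=
  (γ (x + l • y) - γ x) / l

/-- One-sided directional derivative as an infimum. -/
def p (γ : EuclideanSpace ℝ (Fin d) → ℝ) (x y : EuclideanSpace ℝ (Fin d)) : ℝ :=
  sInf (Q γ x y '' Set.Ioi 0)

lemma gauge_zero (hγ : IsGauge γ) : γ 0 = 0 := by
  have h := hγ.2.2.1 0 2 (by norm_num)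
  rw [smul_zero] at h
  linarith

lemma gauge_cvx (hγ : IsGauge γ) {a b : ℝ} (ha : 0 ≤ a) (hb : 0 ≤ b)
    (u v : EuclideanSpace ℝ (Fin d)) :
    γ (a • u + b • v) ≤ a * γ u + b * γ v := by
  rcases eq_or_lt_of_le ha with rfl | ha'
  · rcases eq_or_lt_of_le hb with rfl | hb'
    · simp [gauge_zero hγ]
    · simp [hγ.2.2.1 v b hb', gauge_zero hγ]
  · rcases eq_or_lt_of_le hb with rfl | hb'
    · simp [hγ.2.2.1 u a ha', gauge_zero hγ]
    · calc γ (a • u + b • v) ≤ γ (a • u) + γ (b • v) := hγ.2.2.2 _ _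
        _ = a * γ u + b * γ v := by rw [hγ.2.2.1 u a ha', hγ.2.2.1 v b hb']

lemma Q_mono (hγ : IsGauge γ) (x y : EuclideanSpace ℝ (Fin d)) :
    MonotoneOn (Q γ x y) (Set.Ioi 0) := by
  intro a ha b hb hab
  simp only [Set.mem_Ioi] at ha hb
  rcases eq_or_lt_of_le hab with rfl | hlt
  · exact le_refl _
  have ht0 : 0 < a / b := div_pos ha hb
  have ht1 : (0:ℝ) ≤ 1 - a / b := by
    have : a / b ≤ 1 := (div_le_one hb).2 hab
    linarith
  have hb' : b ≠ 0 := ne_of_gt hb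
  have hvec : x + a • y = (1 - a/b) • x + (a/b) • (x + b • y) := by
    rw [smul_add, smul_smul, div_mul_cancel₀ a hb']
    module
  have hineq : γ (x + a • y) ≤ (1 - a/b) * γ x + (a/b) * γ (x + b • y) := by
    rw [hvec]; exact gauge_cvx hγ ht1 ht0.le x (x + b • y)
  show (γ (x + a • y) - γ x) / a ≤ (γ (x + b • y) - γ x) / b
  rw [div_le_div_iff₀ ha hb]
  have hb' : b ≠ 0 := ne_of_gt hb
  have : (1 - a/b) * γ x + (a/b) * γ (x + b • y)
      = γ x + (a/b) * (γ (x + b • y) - γ x) := by ring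
  rw [this] at hineq
  have := mul_le_mul_of_nonneg_right (sub_le_iff_le_add'.2 hineq) hb.le
  calc (γ (x + a • y) - γ x) * b ≤ (a/b) * (γ (x + b • y) - γ x) * b := this
    _ = (γ (x + b • y) - γ x) * a := by field_simp

lemma Q_lb (hγ : IsGauge γ) (x y : EuclideanSpace ℝ (Fin d)) {l : ℝ} (hl : 0 < l) :
    -γ (-y) ≤ Q γ x y l := by
  have h1 : γ x ≤ γ (x + l • y) + l * γ (-y) := by
    have h2 : x = (x + l • y) + l • (-y) := by module
    calc γ x = γ ((x + l • y) + l • (-y)) := by rw [← h2]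
      _ ≤ γ (x + l • y) + γ (l • (-y)) := hγ.2.2.2 _ _
      _ = γ (x + l • y) + l * γ (-y) := by rw [hγ.2.2.1 _ l hl]
  show -γ (-y) ≤ (γ (x + l • y) - γ x) / l
  rw [le_div_iff₀ hl]
  nlinarith [hγ.1 (-y)]

lemma Q_nonempty (x y : EuclideanSpace ℝ (Fin d)) : (Q γ x y '' Set.Ioi 0).Nonempty :=
  ⟨Q γ x y 1, 1, by norm_num, rfl⟩

lemma Q_bdd (hγ : IsGauge γ) (x y : EuclideanSpace ℝ (Fin d)) :
    BddBelow (Q γ x y '' Set.Ioi 0) := by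
  refine ⟨-γ (-y), ?_⟩
  rintro q ⟨l, hl, rfl⟩
  exact Q_lb hγ x y hl

lemma p_le_Q (hγ : IsGauge γ) (x y : EuclideanSpace ℝ (Fin d)) {l : ℝ} (hl : 0 < l) :
    p γ x y ≤ Q γ x y l :=
  csInf_le (Q_bdd hγ x y) ⟨l, hl, rfl⟩

lemma le_p (x y : EuclideanSpace ℝ (Fin d)) {c : ℝ}
    (h : ∀ l : ℝ, 0 < l → c ≤ Q γ x y l) : c ≤ p γ x y :=
  le_csInf (Q_nonempty x y) (by rintro q ⟨l, hl, rfl⟩; exact h l hl)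

lemma tendsto_Q (hγ : IsGauge γ) (x y : EuclideanSpace ℝ (Fin d)) :
    Filter.Tendsto (Q γ x y) (nhdsWithin 0 (Set.Ioi 0)) (nhds (p γ x y)) :=
  MonotoneOn.tendsto_nhdsGT (Q_mono hγ x y) (Q_bdd hγ x y)

lemma p_zero (hγ : IsGauge γ) (x : EuclideanSpace ℝ (Fin d)) : p γ x 0 = 0 := by
  have h : ∀ l : ℝ, 0 < l → Q γ x 0 l = 0 := by
    intro l hl; simp [Q]
  refine le_antisymm ?_ (le_p x 0 fun l hl => (h l hl).ge)
  have hm : (0:ℝ) ∈ Q γ x 0 '' Set.Ioi 0 := ⟨1, Set.mem_Ioi.2 one_pos, h 1 one_pos⟩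
  exact csInf_le (Q_bdd hγ x 0) hm



lemma orth_iff (hγ : IsGauge γ) (x y : EuclideanSpace ℝ (Fin d)) :
    BirkhoffEps γ 0 x y ↔ 0 ≤ p γ x y ∧ 0 ≤ p γ x (-y) := by
  constructor
  · intro h
    constructor
    · refine le_p x y fun l hl => ?_
      have h1 := h l; rw [add_zero] at h1
      exact div_nonneg (by linarith) hl.le
    · refine le_p x (-y) fun l hl => ?_
      have h1 := h (-l); rw [add_zero] at h1
      have hv : x + (-l) • y = x + l • (-y) := by module
      rw [hv] at h1
      exact div_nonneg (by linarith) hl.le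
  · rintro ⟨h1, h2⟩ l
    rw [add_zero]
    rcases lt_trichotomy l 0 with hl | rfl | hl
    · have hq : 0 ≤ Q γ x (-y) (-l) := h2.trans (p_le_Q hγ x (-y) (neg_pos.2 hl))
      have hd : 0 ≤ γ (x + (-l) • (-y)) - γ x := by
        have := (le_div_iff₀ (neg_pos.2 hl)).1 hq
        simpa using this
      have hv : x + (-l) • (-y) = x + l • y := by module
      rw [hv] at hd; linarith
    · simp
    · have hq : 0 ≤ Q γ x y l := h1.trans (p_le_Q hγ x y hl)
      have hd := (le_div_iff₀ hl).1 hq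
      simp only [zero_mul] at hd
      linarith

lemma tendsto_mul_right {c : ℝ} (hc : 0 < c) :
    Filter.Tendsto (fun l : ℝ => l * c) (nhdsWithin 0 (Set.Ioi 0)) (nhdsWithin 0 (Set.Ioi 0)) := by
  apply tendsto_nhdsWithin_of_tendsto_nhds_of_eventually_within
  · have : Filter.Tendsto (fun l : ℝ => l * c) (nhds 0) (nhds (0 * c)) :=
      (continuous_id.mul continuous_const).tendsto 0
    rw [zero_mul] at this
    exact this.mono_left nhdsWithin_le_nhds
  · filter_upwards [self_mem_nhdsWithin] with l hl
    exact Set.mem_Ioi.2 (mul_pos (Set.mem_Ioi.1 hl) hc)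

lemma p_add_le (hγ : IsGauge γ) (x y z : EuclideanSpace ℝ (Fin d)) :
    p γ x (y + z) ≤ p γ x y + p γ x z := by
  have key : ∀ l : ℝ, 0 < l → p γ x (y + z) ≤ Q γ x y (l * 2) + Q γ x z (l * 2) := by
    intro l hl
    have h2l : 0 < l * 2 := by linarith
    have hvec : x + l • (y + z)
        = (1/2 : ℝ) • (x + (l*2) • y) + (1/2 : ℝ) • (x + (l*2) • z) := by module
    have hcvx : γ (x + l • (y + z))
        ≤ (1/2) * γ (x + (l*2) • y) + (1/2) * γ (x + (l*2) • z) := by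
      rw [hvec]; exact gauge_cvx hγ (by norm_num) (by norm_num) _ _
    have hQ : Q γ x (y + z) l ≤ Q γ x y (l*2) + Q γ x z (l*2) := by
      show (γ (x + l • (y + z)) - γ x) / l
          ≤ (γ (x + (l*2) • y) - γ x) / (l*2) + (γ (x + (l*2) • z) - γ x) / (l*2)
      rw [← add_div, div_le_div_iff₀ hl h2l]
      nlinarith [hcvx]
    exact (p_le_Q hγ x (y + z) hl).trans hQ
  have ht : Filter.Tendsto (fun l => Q γ x y (l*2) + Q γ x z (l*2))
      (nhdsWithin 0 (Set.Ioi 0)) (nhds (p γ x y + p γ x z)) :=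
    ((tendsto_Q hγ x y).comp (tendsto_mul_right two_pos)).add
      ((tendsto_Q hγ x z).comp (tendsto_mul_right two_pos))
  refine ge_of_tendsto ht ?_
  filter_upwards [self_mem_nhdsWithin] with l hl
  exact key l (Set.mem_Ioi.1 hl)

lemma p_smul_pos (hγ : IsGauge γ) (x y : EuclideanSpace ℝ (Fin d)) {c : ℝ} (hc : 0 < c) :
    p γ x (c • y) = c * p γ x y := by
  have hQ : ∀ l : ℝ, 0 < l → Q γ x (c • y) l = c * Q γ x y (l * c) := by
    intro l hl
    show (γ (x + l • (c • y)) - γ x) / l = c * ((γ (x + (l*c) • y) - γ x) / (l*c))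
    rw [smul_smul]
    have hl' : l ≠ 0 := hl.ne'
    have hlc : l * c ≠ 0 := (mul_pos hl hc).ne'
    field_simp
  have h1 := tendsto_Q hγ x (c • y)
  have h2 : Filter.Tendsto (Q γ x (c • y)) (nhdsWithin 0 (Set.Ioi 0))
      (nhds (c * p γ x y)) := by
    have h3 := ((tendsto_Q hγ x y).comp (tendsto_mul_right hc)).const_mul c
    refine h3.congr' ?_
    filter_upwards [self_mem_nhdsWithin] with l hl
    exact (hQ l (Set.mem_Ioi.1 hl)).symm
  exact tendsto_nhds_unique h1 h2

lemma p_cx (hγ : IsGauge γ) (x : EuclideanSpace ℝ (Fin d)) (c : ℝ) :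
    p γ x (c • x) = c * γ x := by
  have hQ : ∀ l : ℝ, 0 < l → 0 < 1 + l * c → Q γ x (c • x) l = c * γ x := by
    intro l hl hlc
    show (γ (x + l • (c • x)) - γ x) / l = c * γ x
    have hv : x + l • (c • x) = (1 + l * c) • x := by module
    rw [hv, hγ.2.2.1 x _ hlc]
    field_simp
    ring
  refine le_antisymm ?_ ?_
  · obtain ⟨l₀, hl₀, hlc⟩ : ∃ l : ℝ, 0 < l ∧ 0 < 1 + l * c := by
      rcases le_or_gt 0 c with h | h
      · exact ⟨1, one_pos, by nlinarith⟩
      · have hc0 : c ≠ 0 := ne_of_lt h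
        refine ⟨-1 / (2 * c), div_pos_of_neg_of_neg (by norm_num) (by linarith), ?_⟩
        have he : -1 / (2 * c) * c = -(1/2 : ℝ) := by
          field_simp
        rw [he]; norm_num
    have h1 := p_le_Q hγ x (c • x) hl₀
    rw [hQ l₀ hl₀ hlc] at h1
    exact h1
  · refine le_p x (c • x) fun l hl => ?_
    rcases lt_or_ge 0 (1 + l * c) with hlc | hlc
    · exact (hQ l hl hlc).ge
    · show c * γ x ≤ (γ (x + l • (c • x)) - γ x) / l
      rw [le_div_iff₀ hl]
      have hv : x + l • (c • x) = (1 + l * c) • x := by module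
      have hnn : 0 ≤ γ (x + l • (c • x)) := hγ.1 _
      have hle : (1 + l * c) * γ x ≤ 0 :=
        mul_nonpos_of_nonpos_of_nonneg (by linarith) (hγ.1 x)
      nlinarith
  
lemma p_shift (hγ : IsGauge γ) (x y : EuclideanSpace ℝ (Fin d)) (c : ℝ) :
    p γ x (y + c • x) = p γ x y + c * γ x := by
  have h1 : p γ x (y + c • x) ≤ p γ x y + c * γ x := by
    have := p_add_le hγ x y (c • x)
    rw [p_cx hγ x c] at this
    exact this
  have h2 : p γ x y ≤ p γ x (y + c • x) + (-c) * γ x := by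
    have h3 := p_add_le hγ x (y + c • x) ((-c) • x)
    rw [p_cx hγ x (-c)] at h3
    have hv : (y + c • x) + (-c) • x = y := by module
    rw [hv] at h3
    exact h3
  linarith

lemma p_sym_nonneg (hγ : IsGauge γ) (x y : EuclideanSpace ℝ (Fin d)) :
    0 ≤ p γ x y + p γ x (-y) := by
  have h := p_add_le hγ x y (-y)
  rw [add_neg_cancel, p_zero hγ x] at h
  linarith


end GaugeAux

open GaugeAux in
theorem gateaux_iff_right_additive (hd : 2 ≤ d)
    (γ : EuclideanSpace ℝ (Fin d) → ℝ) (hγ : IsGauge γ) :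
    (∀ x : EuclideanSpace ℝ (Fin d), x ≠ 0 → GateauxDiffAt γ x) ↔
    (∀ x y z : EuclideanSpace ℝ (Fin d),
      BirkhoffEps γ 0 x y → BirkhoffEps γ 0 x z → BirkhoffEps γ 0 x (y + z)) := by
  unfold GateauxDiffAt
  constructor
  · intro h x y z hy hz
    by_cases hx : x = 0
    · subst hx
      intro l
      rw [gauge_zero hγ, add_zero]
      exact hγ.1 _
    · obtain ⟨L, hL⟩ := h x hx
      have hLp : ∀ w, L w = p γ x w := by
        intro w
        refine le_antisymm ?_ ?_
        · refine le_p x w fun l hl => ?_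
          refine le_of_tendsto (hL w) ?_
          filter_upwards [Ioo_mem_nhdsGT_of_mem (Set.left_mem_Ico.2 hl)] with μ hμ
          exact Q_mono hγ x w (Set.mem_Ioi.2 hμ.1) (Set.mem_Ioi.2 hl) hμ.2.le
        · refine ge_of_tendsto (hL w) ?_
          filter_upwards [self_mem_nhdsWithin] with l hl
          exact p_le_Q hγ x w (Set.mem_Ioi.1 hl)
      have hy' := (orth_iff hγ x y).1 hy
      have hz' := (orth_iff hγ x z).1 hz
      have ey1 : (0:ℝ) ≤ L y := by rw [hLp y]; exact hy'.1
      have ey2 : (0:ℝ) ≤ L (-y) := by rw [hLp (-y)]; exact hy'.2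
      have ez1 : (0:ℝ) ≤ L z := by rw [hLp z]; exact hz'.1
      have ez2 : (0:ℝ) ≤ L (-z) := by rw [hLp (-z)]; exact hz'.2
      rw [map_neg] at ey2 ez2
      have hLy : L y = 0 := le_antisymm (by linarith) ey1
      have hLz : L z = 0 := le_antisymm (by linarith) ez1
      apply (orth_iff hγ x (y + z)).2
      constructor
      · rw [← hLp, map_add, hLy, hLz]; norm_num
      · rw [← hLp, map_neg, map_add, hLy, hLz]; norm_num
  · intro h x hx
    have hG : 0 < γ x := lt_of_le_of_ne (hγ.1 x) fun e => hx (hγ.2.1 x e.symm)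
    have hG' : γ x ≠ 0 := ne_of_gt hG
    have superadd : ∀ y z, p γ x y + p γ x z ≤ p γ x (y + z) := by
      intro y z
      have orth : ∀ w : EuclideanSpace ℝ (Fin d),
          BirkhoffEps γ 0 x (w + (-(p γ x w) / γ x) • x) := by
        intro w
        apply (orth_iff hγ x _).2
        constructor
        · rw [p_shift hγ x w]
          rw [div_mul_cancel₀ _ hG']
          simp
        · have hv : -(w + (-(p γ x w) / γ x) • x) = (-w) + (p γ x w / γ x) • x := by module
          rw [hv, p_shift hγ x (-w), div_mul_cancel₀ _ hG']
          have := p_sym_nonneg hγ x w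
          linarith
      have o3 := h x _ _ (orth y) (orth z)
      have hv : (y + (-(p γ x y) / γ x) • x) + (z + (-(p γ x z) / γ x) • x)
          = (y + z) + ((-(p γ x y) / γ x) + (-(p γ x z) / γ x)) • x := by module
      rw [hv] at o3
      have h0 := ((orth_iff hγ x _).1 o3).1
      rw [p_shift hγ x (y + z)] at h0
      have he : ((-(p γ x y) / γ x) + (-(p γ x z) / γ x)) * γ x
          = -(p γ x y) - p γ x z := by
        field_simp
        ring
      rw [he] at h0
      linarith
    have padd : ∀ y z, p γ x (y + z) = p γ x y + p γ x z :=
      fun y z => le_antisymm (p_add_le hγ x y z) (superadd y z)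
    have pneg : ∀ y, p γ x (-y) = -p γ x y := by
      intro y
      have := padd y (-y)
      rw [add_neg_cancel, p_zero hγ x] at this
      linarith
    refine ⟨{ toFun := p γ x, map_add' := padd, map_smul' := ?_ }, ?_⟩
    · intro c y
      simp only [RingHom.id_apply, smul_eq_mul]
      rcases lt_trichotomy c 0 with hc | rfl | hc
      · have hv : c • y = (-c) • (-y) := by module
        rw [hv, p_smul_pos hγ x (-y) (neg_pos.2 hc), pneg]; ring
      · rw [zero_smul, p_zero hγ x]; ring
      · exact p_smul_pos hγ x y hc
    · intro y
      exact tendsto_Q hγ x y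
end
end

section
/- Let γ be a gauge on ℝ^d (d ≥ 2). The unit ball {x : γ(x) ≤ 1} is smooth (each boundary point lies on a unique supporting hyperplane) if and only if for every x, y ∈ ℝ^d with x ≠ 0 there exists a unique α ∈ ℝ such that x ⊥_B (αx + y). -/
open scoped RealInnerProductSpace

noncomputable section

variable {d : ℕ}

/-! ### Auxiliary lemmas -/

lemma IsGauge.zero'_s12 {γ : EuclideanSpace ℝ (Fin d) → ℝ} (hγ : IsGauge γ) : γ 0 = 0 := by
  have h := hγ.2.2.1 0 2 (by norm_num)
  rw [smul_zero] at h
  linarith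

lemma IsGauge.pos' {γ : EuclideanSpace ℝ (Fin d) → ℝ} (hγ : IsGauge γ)
    {x : EuclideanSpace ℝ (Fin d)} (hx : x ≠ 0) : 0 < γ x :=
  lt_of_le_of_ne (hγ.1 x) (fun h => hx (hγ.2.1 x h.symm))

lemma IsGauge.smul_nonneg' {γ : EuclideanSpace ℝ (Fin d) → ℝ} (hγ : IsGauge γ)
    {a : ℝ} (ha : 0 ≤ a) (x : EuclideanSpace ℝ (Fin d)) : γ (a • x) = a * γ x := by
  rcases eq_or_lt_of_le ha with h | h
  · rw [← h, zero_smul, hγ.zero'_s12, zero_mul]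
  · exact hγ.2.2.1 x a h

lemma IsGauge.convexOn' {γ : EuclideanSpace ℝ (Fin d) → ℝ} (hγ : IsGauge γ) :
    ConvexOn ℝ Set.univ γ := by
  refine ⟨convex_univ, fun p _ q _ a b ha hb hab => ?_⟩
  calc γ (a • p + b • q) ≤ γ (a • p) + γ (b • q) := hγ.2.2.2 _ _
    _ = a * γ p + b * γ q := by rw [hγ.smul_nonneg' ha, hγ.smul_nonneg' hb]
    _ = a • γ p + b • γ q := by simp [smul_eq_mul]

lemma IsGauge.continuous' {γ : EuclideanSpace ℝ (Fin d) → ℝ} (hγ : IsGauge γ) :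
    Continuous γ :=
  continuousOn_univ.mp (hγ.convexOn'.continuousOn isOpen_univ)

/-- If `σ * a < u` for all `σ ∈ (0,1)` then `a ≤ u`, provided `0 < u`. -/
lemma aux_scale_le {a u : ℝ} (hu : 0 < u) (h : ∀ σ : ℝ, 0 < σ → σ < 1 → σ * a < u) :
    a ≤ u := by
  by_contra h'
  push_neg at h'
  have ha : 0 < a := hu.trans h'
  have hσ := h ((u + a) / (2 * a)) (by positivity) (by rw [div_lt_one (by positivity)]; linarith)
  rw [div_mul_eq_mul_div, mul_comm] at hσ
  have : (u + a) / 2 < u := by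
    calc (u + a) / 2 = a * (u + a) / (2 * a) := by field_simp
      _ < u := hσ
  linarith

/-- Hahn–Banach support-functional lemma: if `x ⊥_B z` (Birkhoff) then there is a linear
functional `⟪w, ·⟫ ≤ γ` with `⟪w, x⟫ = γ x` and `⟪w, z⟫ = 0`. -/
lemma exists_support_functional {γ : EuclideanSpace ℝ (Fin d) → ℝ} (hγ : IsGauge γ)
    {x z : EuclideanSpace ℝ (Fin d)} (hx : x ≠ 0)
    (hb : ∀ l : ℝ, γ x ≤ γ (x + l • z)) :
    ∃ w : EuclideanSpace ℝ (Fin d),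
      (∀ v, ⟪w, v⟫ ≤ γ v) ∧ ⟪w, x⟫ = γ x ∧ ⟪w, z⟫ = 0 := by
  set t := γ x with ht
  have ht0 : 0 < t := hγ.pos' hx
  set s : Set (EuclideanSpace ℝ (Fin d)) := {y | γ y < t} with hs
  have hs_convex : Convex ℝ s := by
    have h := hγ.convexOn'.convex_lt t
    simpa [hs] using h
  have hs_open : IsOpen s := isOpen_lt hγ.continuous' continuous_const
  set T : Set (EuclideanSpace ℝ (Fin d)) := Set.range (fun l : ℝ => x + l • z) with hT
  have hT_convex : Convex ℝ T := by
    rintro p ⟨l₁, rfl⟩ q ⟨l₂, rfl⟩ a b ha hb' hab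
    refine ⟨a * l₁ + b * l₂, ?_⟩
    simp only
    have h1 : a • (x + l₁ • z) + b • (x + l₂ • z) = (a + b) • x + (a * l₁ + b * l₂) • z := by
      module
    rw [h1, hab, one_smul]
  have hdisj : Disjoint s T := by
    rw [Set.disjoint_left]
    rintro p hp ⟨l, rfl⟩
    exact absurd (hb l) (not_le.mpr hp)
  obtain ⟨f, u, hfs, hft⟩ := geometric_hahn_banach_open hs_convex hs_open hT_convex hdisj
  have hu0 : 0 < u := by
    have h0 : (0 : EuclideanSpace ℝ (Fin d)) ∈ s := by
      simp [hs, hγ.zero'_s12, ht0]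
    have := hfs 0 h0
    simpa using this
  have hfx_ge : u ≤ f x := by
    have := hft x ⟨0, by simp⟩
    exact this
  have hfx_le : f x ≤ u := by
    refine aux_scale_le hu0 (fun σ hσ0 hσ1 => ?_)
    have hmem : σ • x ∈ s := by
      simp only [hs, Set.mem_setOf_eq]
      rw [hγ.2.2.1 x σ hσ0]
      calc σ * t < 1 * t := by apply mul_lt_mul_of_pos_right hσ1 ht0
        _ = t := one_mul t
    have := hfs (σ • x) hmem
    rwa [map_smul, smul_eq_mul] at this
  have hfx : f x = u := le_antisymm hfx_le hfx_ge
  have hfl : ∀ l : ℝ, f (x + l • z) = f x + l * f z := by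
    intro l
    rw [map_add, map_smul, smul_eq_mul]
  have hfz : f z = 0 := by
    have h1 := hft (x + (1:ℝ) • z) ⟨1, rfl⟩
    have h2 := hft (x + (-1:ℝ) • z) ⟨-1, rfl⟩
    rw [hfl] at h1 h2
    rw [hfx] at h1 h2
    linarith
  have hle : ∀ v, f v ≤ (u / t) * γ v := by
    intro v
    by_cases hv : v = 0
    · simp [hv, hγ.zero'_s12]
    · have hγv : 0 < γ v := hγ.pos' hv
      have key : (t / γ v) * f v ≤ u := by
        refine aux_scale_le hu0 (fun σ hσ0 hσ1 => ?_)
        have hc0 : 0 < σ * (t / γ v) := by positivity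
        have hmem : (σ * (t / γ v)) • v ∈ s := by
          simp only [hs, Set.mem_setOf_eq]
          rw [hγ.2.2.1 v _ hc0]
          calc σ * (t / γ v) * γ v = σ * t := by field_simp
            _ < 1 * t := by apply mul_lt_mul_of_pos_right hσ1 ht0
            _ = t := one_mul t
        have := hfs _ hmem
        rw [map_smul, smul_eq_mul] at this
        calc σ * (t / γ v * f v) = σ * (t / γ v) * f v := by ring
          _ < u := this
      have h2 : t * f v ≤ u * γ v := by
        rw [div_mul_eq_mul_div, div_le_iff₀ hγv] at key
        linarith
      rw [div_mul_eq_mul_div, le_div_iff₀ ht0]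
      linarith
  set w0 := (InnerProductSpace.toDual ℝ (EuclideanSpace ℝ (Fin d))).symm f with hw0
  have hw0app : ∀ v, ⟪w0, v⟫ = f v := fun v => InnerProductSpace.toDual_symm_apply
  refine ⟨(t / u) • w0, fun v => ?_, ?_, ?_⟩
  · rw [real_inner_smul_left, hw0app]
    calc t / u * f v ≤ t / u * ((u / t) * γ v) := by
          apply mul_le_mul_of_nonneg_left (hle v) (by positivity)
      _ = γ v := by field_simp
  · rw [real_inner_smul_left, hw0app, hfx]
    field_simp
  · rw [real_inner_smul_left, hw0app, hfz, mul_zero]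

/-- A functional certificate yields Birkhoff orthogonality. -/
lemma birkhoff_of_functional {γ : EuclideanSpace ℝ (Fin d) → ℝ}
    {x y w : EuclideanSpace ℝ (Fin d)} {β : ℝ}
    (hw1 : ∀ v, ⟪w, v⟫ ≤ γ v) (hw2 : ⟪w, x⟫ = γ x)
    (hβ : β * γ x + ⟪w, y⟫ = 0) :
    BirkhoffEps γ 0 x (β • x + y) := by
  intro l
  have h := hw1 (x + l • (β • x + y))
  have hcalc : ⟪w, x + l • (β • x + y)⟫ = γ x := by
    rw [inner_add_right, real_inner_smul_right, inner_add_right, real_inner_smul_right, hw2]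
    linear_combination l * hβ
  rw [add_zero]
  linarith [hcalc ▸ h]

/-- A hyperplane `{⟪a,·⟫ = 1}` determines `a`. -/
lemma hyperplane_eq {a b : EuclideanSpace ℝ (Fin d)} (ha : a ≠ 0)
    (h : {y : EuclideanSpace ℝ (Fin d) | ⟪a, y⟫ = 1} = {y | ⟪b, y⟫ = 1}) : a = b := by
  have hmem : ∀ y : EuclideanSpace ℝ (Fin d), ⟪a, y⟫ = 1 → ⟪b, y⟫ = 1 := by
    intro y hy
    have := (Set.ext_iff.mp h y).mp hy
    exact this
  have hna : (0:ℝ) < ⟪a, a⟫ :=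
    lt_of_le_of_ne real_inner_self_nonneg (fun hc => ha (inner_self_eq_zero.mp hc.symm))
  set y₀ : EuclideanSpace ℝ (Fin d) := (⟪a, a⟫)⁻¹ • a with hy₀
  have hay₀ : ⟪a, y₀⟫ = 1 := by
    rw [hy₀, real_inner_smul_right, inv_mul_cancel₀ hna.ne']
  have hby₀ : ⟪b, y₀⟫ = 1 := hmem y₀ hay₀
  have hab' : ⟪a, b - a⟫ = 0 := by
    have hba : ⟪b, a⟫ = ⟪a, a⟫ := by
      have h1 := hby₀
      rw [hy₀, real_inner_smul_right] at h1
      have h2 : ⟪a, a⟫ * ((⟪a, a⟫)⁻¹ * ⟪b, a⟫) = ⟪a, a⟫ * 1 := by rw [h1]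
      rw [← mul_assoc, mul_inv_cancel₀ hna.ne', one_mul, mul_one] at h2
      exact h2
    rw [inner_sub_right, real_inner_comm]
    linarith [hba]
  have hbb' : ⟪b, b - a⟫ = 0 := by
    have hy₁ : ⟪a, y₀ + (b - a)⟫ = 1 := by
      rw [inner_add_right, hay₀, hab', add_zero]
    have := hmem _ hy₁
    rw [inner_add_right, hby₀] at this
    linarith
  have : ⟪b - a, b - a⟫ = 0 := by
    rw [inner_sub_left, hbb', hab', sub_zero]
  have := inner_self_eq_zero.mp this
  have : b = a := sub_eq_zero.mp this
  exact this.symm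

theorem smooth_iff_right_unique (hd : 2 ≤ d)
    (γ : EuclideanSpace ℝ (Fin d) → ℝ) (hγ : IsGauge γ) :
    (∀ x : EuclideanSpace ℝ (Fin d), γ x = 1 →
      ∃! H : Set (EuclideanSpace ℝ (Fin d)),
        ∃ xs : EuclideanSpace ℝ (Fin d), xs ≠ 0 ∧ ∃ c : ℝ,
          H = {y | ⟪xs, y⟫ = c} ∧ ⟪xs, x⟫ = c ∧
          ∀ z : EuclideanSpace ℝ (Fin d), γ z ≤ 1 → ⟪xs, z⟫ ≤ c) ↔
    (∀ x y : EuclideanSpace ℝ (Fin d), x ≠ 0 →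
      ∃! α : ℝ, BirkhoffEps γ 0 x (α • x + y)) := by
  constructor
  · -- smooth → unique α
    intro hsmooth x y hx
    have ht0 : 0 < γ x := hγ.pos' hx
    set xh : EuclideanSpace ℝ (Fin d) := (γ x)⁻¹ • x with hxh
    have hγxh : γ xh = 1 := by
      rw [hxh, hγ.2.2.1 x _ (inv_pos.mpr ht0), inv_mul_cancel₀ ht0.ne']
    obtain ⟨H, hH, hHuniq⟩ := hsmooth xh hγxh
    -- For every w that supports γ at x, we get a supporting hyperplane at xh;
    -- by uniqueness all such w coincide.
    have hsupport : ∀ w : EuclideanSpace ℝ (Fin d),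
        (∀ v, ⟪w, v⟫ ≤ γ v) → ⟪w, x⟫ = γ x → {y' | ⟪w, y'⟫ = 1} = H := by
      intro w hw1 hw2
      refine hHuniq _ ⟨w, ?_, 1, rfl, ?_, fun z hz => (hw1 z).trans hz⟩
      · intro hc
        rw [hc] at hw2
        simp only [inner_zero_left] at hw2
        exact ht0.ne hw2
      · rw [hxh, real_inner_smul_right, hw2, inv_mul_cancel₀ ht0.ne']
    -- the basic supporting functional (with z = 0)
    obtain ⟨w, hw1, hw2, -⟩ := exists_support_functional hγ hx
      (z := 0) (fun l => by rw [smul_zero, add_zero])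
    have hwne : w ≠ 0 := by
      intro hc
      rw [hc] at hw2
      simp only [inner_zero_left] at hw2
      exact ht0.ne hw2
    refine ⟨-⟪w, y⟫ / γ x, ?_, ?_⟩
    · exact birkhoff_of_functional hw1 hw2 (by field_simp; ring)
    · intro α hα
      obtain ⟨wα, hwα1, hwα2, hwα3⟩ := exists_support_functional hγ hx
        (z := α • x + y) (fun l => by simpa using hα l)
      have heq : wα = w := by
        refine hyperplane_eq ?_ ?_
        · intro hc
          rw [hc] at hwα2
          simp only [inner_zero_left] at hwα2
          exact ht0.ne hwα2
        · rw [hsupport wα hwα1 hwα2, hsupport w hw1 hw2]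
      rw [heq] at hwα3
      rw [inner_add_right, real_inner_smul_right, hw2] at hwα3
      rw [eq_div_iff ht0.ne']
      linarith
  · -- unique α → smooth
    intro huniq x hγx
    have hx : x ≠ 0 := by
      intro hc
      rw [hc, hγ.zero'_s12] at hγx
      norm_num at hγx
    obtain ⟨w, hw1, hw2, -⟩ := exists_support_functional hγ hx
      (z := 0) (fun l => by rw [smul_zero, add_zero])
    rw [hγx] at hw2
    have hwne : w ≠ 0 := by
      intro hc
      rw [hc] at hw2
      simp only [inner_zero_left] at hw2
      norm_num at hw2
    refine ⟨{y | ⟪w, y⟫ = 1}, ⟨w, hwne, 1, rfl, hw2, fun z hz => (hw1 z).trans hz⟩, ?_⟩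
    rintro H' ⟨xs, hxs0, c, rfl, hxsx, hsupp⟩
    -- ⟪xs, z⟫ ≤ c * γ z for all z
    have hb : ∀ z, ⟪xs, z⟫ ≤ c * γ z := by
      intro z
      by_cases hz : z = 0
      · simp [hz, hγ.zero'_s12]
      · have hγz : 0 < γ z := hγ.pos' hz
        have hmem : γ ((γ z)⁻¹ • z) ≤ 1 := by
          rw [hγ.2.2.1 z _ (inv_pos.mpr hγz), inv_mul_cancel₀ hγz.ne']
        have h := hsupp _ hmem
        rw [real_inner_smul_right] at h
        have h2 : γ z * ((γ z)⁻¹ * ⟪xs, z⟫) ≤ γ z * c :=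
          mul_le_mul_of_nonneg_left h hγz.le
        rw [← mul_assoc, mul_inv_cancel₀ hγz.ne', one_mul] at h2
        linarith [mul_comm (γ z) c]
    have hxsp : (0:ℝ) < ⟪xs, xs⟫ :=
      lt_of_le_of_ne real_inner_self_nonneg
        (fun hc => hxs0 (inner_self_eq_zero.mp hc.symm))
    have hc0 : 0 < c := by
      nlinarith [hb xs, hγ.pos' hxs0]
    set w' : EuclideanSpace ℝ (Fin d) := c⁻¹ • xs with hw'
    have hw'1 : ∀ v, ⟪w', v⟫ ≤ γ v := by
      intro v
      rw [hw', real_inner_smul_left]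
      have := hb v
      calc c⁻¹ * ⟪xs, v⟫ ≤ c⁻¹ * (c * γ v) := by
            apply mul_le_mul_of_nonneg_left this (by positivity)
        _ = γ v := by field_simp
    have hw'2 : ⟪w', x⟫ = 1 := by
      rw [hw', real_inner_smul_left, hxsx, inv_mul_cancel₀ hc0.ne']
    -- every linear functional supporting γ at x agrees with w, by uniqueness of α
    have hinner : ∀ y₀, ⟪w', y₀⟫ = ⟪w, y₀⟫ := by
      intro y₀
      obtain ⟨α₀, -, hαuniq⟩ := huniq x y₀ hx
      have h1 : BirkhoffEps γ 0 x ((-⟪w, y₀⟫) • x + y₀) :=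
        birkhoff_of_functional hw1 (hγx ▸ hw2) (by rw [hγx]; ring)
      have h2 : BirkhoffEps γ 0 x ((-⟪w', y₀⟫) • x + y₀) :=
        birkhoff_of_functional hw'1 (hγx ▸ hw'2) (by rw [hγx]; ring)
      have e1 := hαuniq _ h1
      have e2 := hαuniq _ h2
      have : -⟪w, y₀⟫ = -⟪w', y₀⟫ := by rw [e1, e2]
      linarith
    have hww : w' = w := by
      have hz : ⟪w' - w, w' - w⟫ = 0 := by
        have h1 := hinner (w' - w)
        rw [inner_sub_left]
        linarith
      exact sub_eq_zero.mp (inner_self_eq_zero.mp hz)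
    ext y₀
    simp only [Set.mem_setOf_eq]
    constructor
    · intro h
      rw [← hww, hw', real_inner_smul_left, h, inv_mul_cancel₀ hc0.ne']
    · intro h
      rw [← hww, hw', real_inner_smul_left] at h
      have h2 : c * (c⁻¹ * ⟪xs, y₀⟫) = c * 1 := by rw [h]
      rw [← mul_assoc, mul_inv_cancel₀ hc0.ne', one_mul, mul_one] at h2
      exact h2
end
end

section
/- Let γ be a gauge on ℝ^d (d ≥ 2). If Birkhoff orthogonality with respect to γ is left additive (for all x, y, z: x ⊥_B z and y ⊥_B z imply (x+y) ⊥_B z), then γ is a norm, i.e., γ(−x) = γ(x) for all x. -/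
open scoped RealInnerProductSpace

noncomputable section

variable {d : ℕ}

namespace BirkhoffAux

open Set Filter

/-- Plain Birkhoff orthogonality. -/
def Bir (γ : EuclideanSpace ℝ (Fin d) → ℝ) (x z : EuclideanSpace ℝ (Fin d)) : Prop :=
  ∀ l : ℝ, γ x ≤ γ (x + l • z)

/-- Slope of the restriction of γ to a line. -/
def sl (γ : EuclideanSpace ℝ (Fin d) → ℝ) (x v : EuclideanSpace ℝ (Fin d)) (s : ℝ) : ℝ :=
  (γ (x + s • v) - γ x) / s

/-- Right derivative at 0 of `s ↦ γ (x + s • v)`. -/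
def rd (γ : EuclideanSpace ℝ (Fin d) → ℝ) (x v : EuclideanSpace ℝ (Fin d)) : ℝ :=
  sInf (sl γ x v '' Set.Ioi 0)

variable {γ : EuclideanSpace ℝ (Fin d) → ℝ}

theorem gauge_zero (hγ : IsGauge γ) : γ 0 = 0 := by
  have h := hγ.2.2.1 0 2 (by norm_num)
  rw [smul_zero] at h
  linarith

theorem gauge_pos (hγ : IsGauge γ) {x : EuclideanSpace ℝ (Fin d)} (hx : x ≠ 0) : 0 < γ x :=
  lt_of_le_of_ne (hγ.1 x) fun hc => hx (hγ.2.1 x hc.symm)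

theorem gauge_smul (hγ : IsGauge γ) (x : EuclideanSpace ℝ (Fin d)) {l : ℝ} (hl : 0 ≤ l) :
    γ (l • x) = l * γ x := by
  rcases hl.eq_or_lt with rfl | hl'
  · simp [gauge_zero hγ]
  · exact hγ.2.2.1 x l hl'

theorem gauge_combo (hγ : IsGauge γ) {a b : ℝ} (ha : 0 ≤ a) (hb : 0 ≤ b) (hab : a + b = 1)
    (p q : EuclideanSpace ℝ (Fin d)) : γ (a • p + b • q) ≤ a * γ p + b * γ q :=
  calc γ (a • p + b • q) ≤ γ (a • p) + γ (b • q) := hγ.2.2.2 _ _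
    _ = a * γ p + b * γ q := by rw [gauge_smul hγ _ ha, gauge_smul hγ _ hb]

theorem convexOn_line (hγ : IsGauge γ) (x v : EuclideanSpace ℝ (Fin d)) :
    ConvexOn ℝ Set.univ (fun s : ℝ => γ (x + s • v)) := by
  refine ⟨convex_univ, fun s _ t _ a b ha hb hab => ?_⟩
  obtain rfl : b = 1 - a := by linarith
  simp only [smul_eq_mul]
  have hvec : x + (a * s + (1 - a) * t) • v = a • (x + s • v) + (1 - a) • (x + t • v) := by
    module
  rw [hvec]
  exact gauge_combo hγ ha hb (by ring) _ _

theorem sl_mono (hγ : IsGauge γ) (x v : EuclideanSpace ℝ (Fin d)) {s t : ℝ}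
    (hs : s ≠ 0) (ht : t ≠ 0) (hst : s ≤ t) : sl γ x v s ≤ sl γ x v t := by
  have h := (convexOn_line hγ x v).secant_mono (a := 0) (Set.mem_univ _) (Set.mem_univ _)
    (Set.mem_univ _) hs ht hst
  simpa [sl, sub_zero] using h

theorem sl_image_nonempty (x v : EuclideanSpace ℝ (Fin d)) :
    (sl γ x v '' Set.Ioi 0).Nonempty :=
  ⟨sl γ x v 1, ⟨1, by norm_num, rfl⟩⟩

theorem sl_bdd (hγ : IsGauge γ) (x v : EuclideanSpace ℝ (Fin d)) :
    BddBelow (sl γ x v '' Set.Ioi 0) := by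
  refine ⟨sl γ x v (-1), ?_⟩
  rintro _ ⟨s, hs, rfl⟩
  have hs' : (0:ℝ) < s := hs
  exact sl_mono hγ x v (by norm_num) (ne_of_gt hs') (by linarith)

theorem rd_le_sl (hγ : IsGauge γ) (x v : EuclideanSpace ℝ (Fin d)) {s : ℝ} (hs : 0 < s) :
    rd γ x v ≤ sl γ x v s :=
  csInf_le (sl_bdd hγ x v) ⟨s, hs, rfl⟩

theorem tendsto_sl (hγ : IsGauge γ) (x v : EuclideanSpace ℝ (Fin d)) :
    Tendsto (sl γ x v) (nhdsWithin 0 (Set.Ioi 0)) (nhds (rd γ x v)) := by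
  rw [tendsto_order]
  constructor
  · intro b hb
    filter_upwards [self_mem_nhdsWithin] with s hs
    exact lt_of_lt_of_le hb (rd_le_sl hγ x v hs)
  · intro b hb
    obtain ⟨_, ⟨s0, hs0, rfl⟩, hy⟩ := exists_lt_of_csInf_lt (sl_image_nonempty x v) hb
    have hs0' : (0:ℝ) < s0 := hs0
    filter_upwards [Ioo_mem_nhdsGT_of_mem (⟨le_refl 0, hs0'⟩ : (0:ℝ) ∈ Set.Ico 0 s0)]
      with s hs
    exact lt_of_le_of_lt (sl_mono hγ x v (ne_of_gt hs.1) (ne_of_gt hs0') (le_of_lt hs.2)) hy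

theorem hasDeriv_gauge (hγ : IsGauge γ) (x v : EuclideanSpace ℝ (Fin d)) (t : ℝ) :
    HasDerivWithinAt (fun s : ℝ => γ (x + s • v)) (rd γ (x + t • v) v) (Set.Ici t) t := by
  rw [hasDerivWithinAt_iff_tendsto_slope, Set.Ici_sdiff_left]
  have hshift : Tendsto (fun s : ℝ => s - t) (nhdsWithin t (Set.Ioi t))
      (nhdsWithin 0 (Set.Ioi 0)) := by
    apply tendsto_nhdsWithin_of_tendsto_nhds_of_eventually_within
    · have : Tendsto (fun s : ℝ => s - t) (nhds t) (nhds (t - t)) :=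
        (continuous_id.sub continuous_const).tendsto t
      rw [sub_self] at this
      exact this.mono_left nhdsWithin_le_nhds
    · filter_upwards [self_mem_nhdsWithin] with s hs
      simpa [Set.mem_Ioi, sub_pos] using hs
  have hcomp := (tendsto_sl hγ (x + t • v) v).comp hshift
  refine hcomp.congr' ?_
  filter_upwards [self_mem_nhdsWithin] with s hs
  have hst : s - t ≠ 0 := sub_ne_zero.mpr (ne_of_gt hs)
  have hvec : (x + t • v) + (s - t) • v = x + s • v := by module
  rw [slope_def_field]
  simp only [Function.comp_apply, sl, hvec]

theorem rd_nonneg_of_bir (hγ : IsGauge γ) {x v : EuclideanSpace ℝ (Fin d)}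
    (hb : Bir γ x v) : 0 ≤ rd γ x v := by
  refine le_csInf (sl_image_nonempty x v) ?_
  rintro _ ⟨s, hs, rfl⟩
  have hs' : (0:ℝ) < s := hs
  exact div_nonneg (sub_nonneg.mpr (hb s)) (le_of_lt hs')

theorem gauge_ge_support (hγ : IsGauge γ) (x v : EuclideanSpace ℝ (Fin d)) {s : ℝ}
    (hs : 0 ≤ s) : γ x + s * rd γ x v ≤ γ (x + s • v) := by
  rcases hs.eq_or_lt with rfl | hs'
  · simp
  · have h := rd_le_sl hγ x v hs'
    rw [sl, le_div_iff₀ hs', mul_comm] at h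
    linarith

theorem rd_pair_nonneg (hγ : IsGauge γ) (x v : EuclideanSpace ℝ (Fin d)) :
    0 ≤ rd γ x v + rd γ x (-v) := by
  have hsum : Tendsto (fun s => sl γ x v s + sl γ x (-v) s) (nhdsWithin 0 (Set.Ioi 0))
      (nhds (rd γ x v + rd γ x (-v))) := (tendsto_sl hγ x v).add (tendsto_sl hγ x (-v))
  refine ge_of_tendsto hsum ?_
  filter_upwards [self_mem_nhdsWithin] with s hs
  have hs' : (0:ℝ) < s := hs
  have hx2 : (x + s • v) + (x + s • (-v)) = (2:ℝ) • x := by module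
  have hsub := hγ.2.2.2 (x + s • v) (x + s • (-v))
  rw [hx2, hγ.2.2.1 x 2 (by norm_num)] at hsub
  have h0 : 0 ≤ (γ (x + s • v) - γ x) + (γ (x + s • (-v)) - γ x) := by linarith
  unfold sl
  rw [← add_div]
  exact div_nonneg h0 (le_of_lt hs')

theorem rd_shift (hγ : IsGauge γ) (x v : EuclideanSpace ℝ (Fin d)) (c : ℝ) :
    rd γ x (v + c • x) = rd γ x v + c * γ x := by
  set m : ℝ → ℝ := fun s => s / (1 + s * c) with hm
  have h1 : Tendsto (fun s : ℝ => 1 + s * c) (nhdsWithin 0 (Set.Ioi 0)) (nhds 1) := by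
    have : Tendsto (fun s : ℝ => 1 + s * c) (nhds 0) (nhds (1 + 0 * c)) :=
      (continuous_const.add (continuous_id.mul continuous_const)).tendsto 0
    rw [show (1:ℝ) + 0 * c = 1 by ring] at this
    exact this.mono_left nhdsWithin_le_nhds
  have hden : ∀ᶠ s in nhdsWithin (0:ℝ) (Set.Ioi 0), 0 < 1 + s * c :=
    h1.eventually (eventually_gt_nhds one_pos)
  have hm0 : Tendsto m (nhdsWithin 0 (Set.Ioi 0)) (nhds 0) := by
    have hid : Tendsto (fun s : ℝ => s) (nhdsWithin 0 (Set.Ioi 0)) (nhds 0) :=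
      tendsto_id.mono_left nhdsWithin_le_nhds
    have := hid.div h1 one_ne_zero
    rw [zero_div] at this
    exact this
  have hmIn : ∀ᶠ s in nhdsWithin (0:ℝ) (Set.Ioi 0), m s ∈ Set.Ioi 0 := by
    filter_upwards [self_mem_nhdsWithin, hden] with s hs hds
    exact div_pos hs hds
  have hmT : Tendsto m (nhdsWithin 0 (Set.Ioi 0)) (nhdsWithin 0 (Set.Ioi 0)) :=
    tendsto_nhdsWithin_of_tendsto_nhds_of_eventually_within m hm0 hmIn
  have hT2 : Tendsto (fun s => sl γ x v (m s) + c * γ x) (nhdsWithin 0 (Set.Ioi 0))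
      (nhds (rd γ x v + c * γ x)) :=
    ((tendsto_sl hγ x v).comp hmT).add tendsto_const_nhds
  have heq : ∀ᶠ s in nhdsWithin (0:ℝ) (Set.Ioi 0),
      sl γ x v (m s) + c * γ x = sl γ x (v + c • x) s := by
    filter_upwards [self_mem_nhdsWithin, hden] with s hs hds
    have hs' : (0:ℝ) < s := hs
    have hms : (1 + s * c) * m s = s := by
      simp only [hm]
      field_simp [hds.ne']
    have hvec : x + s • (v + c • x) = (1 + s * c) • (x + m s • v) := by
      have : (1 + s * c) • (x + m s • v) = (1 + s*c) • x + ((1 + s*c) * m s) • v := by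
        simp only [smul_add, smul_smul]
      rw [this, hms]
      module
    have hγeq : γ (x + s • (v + c • x)) = (1 + s * c) * γ (x + m s • v) := by
      rw [hvec, hγ.2.2.1 _ _ hds]
    unfold sl
    rw [hγeq]
    have hmne : m s ≠ 0 := ne_of_gt (div_pos hs' hds)
    field_simp [hm]
    linear_combination (γ x - γ (x + m s • v)) * hms
  have hT3 : Tendsto (sl γ x (v + c • x)) (nhdsWithin 0 (Set.Ioi 0))
      (nhds (rd γ x v + c * γ x)) := hT2.congr' heq
  exact tendsto_nhds_unique (tendsto_sl hγ x (v + c • x)) hT3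

theorem gauge_line_lip (hγ : IsGauge γ) (x v : EuclideanSpace ℝ (Fin d)) :
    Continuous (fun s : ℝ => γ (x + s • v)) := by
  set K : ℝ := max (γ v) (γ (-v)) with hK
  have hK0 : 0 ≤ K := le_trans (hγ.1 v) (le_max_left _ _)
  have key : ∀ s t : ℝ, γ (x + s • v) - γ (x + t • v) ≤ |s - t| * K := by
    intro s t
    have hvec : x + s • v = (x + t • v) + (s - t) • v := by module
    have hsub := hγ.2.2.2 (x + t • v) ((s - t) • v)
    rw [← hvec] at hsub
    have hbound : γ ((s - t) • v) ≤ |s - t| * K := by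
      rcases le_or_gt 0 (s - t) with hst | hst
      · rw [gauge_smul hγ v hst, abs_of_nonneg hst]
        exact mul_le_mul_of_nonneg_left (le_max_left _ _) hst
      · rw [show (s - t) • v = (t - s) • (-v) by module,
          gauge_smul hγ (-v) (by linarith), abs_of_neg hst, neg_sub]
        exact mul_le_mul_of_nonneg_left (le_max_right _ _) (by linarith)
    linarith
  rw [Metric.continuous_iff]
  intro s ε hε
  rcases eq_or_lt_of_le hK0 with hK' | hK'
  · exact ⟨1, one_pos, fun t _ => by
      have h1 := key t s
      have h2 := key s t
      rw [← hK'] at h1 h2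
      simp only [mul_zero] at h1 h2
      have : dist (γ (x + t • v)) (γ (x + s • v)) = |γ (x + t • v) - γ (x + s • v)| := rfl
      rw [this, abs_sub_lt_iff]
      constructor <;> linarith⟩
  · refine ⟨ε / K, div_pos hε hK', fun t ht => ?_⟩
    have h1 := key t s
    have h2 := key s t
    have habs : |t - s| < ε / K := ht
    have habs' : |s - t| = |t - s| := abs_sub_comm s t
    have hlt : |t - s| * K < ε := by
      rw [← lt_div_iff₀ hK']
      exact habs
    have : dist (γ (x + t • v)) (γ (x + s • v)) = |γ (x + t • v) - γ (x + s • v)| := rfl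
    rw [this, abs_sub_lt_iff]
    constructor <;> [skip; rw [habs'] at h2] <;> linarith

/-- Existence of a minimizer of γ along a line. -/
theorem min_exists (hγ : IsGauge γ) (x : EuclideanSpace ℝ (Fin d))
    {v : EuclideanSpace ℝ (Fin d)} (hv : v ≠ 0) :
    ∃ t : ℝ, ∀ s : ℝ, γ (x + t • v) ≤ γ (x + s • v) := by
  set φ : ℝ → ℝ := fun s => γ (x + s • v) with hφ
  have hcont : Continuous φ := gauge_line_lip hγ x v
  set c : ℝ := min (γ v) (γ (-v)) with hc
  have hc0 : 0 < c := lt_min (gauge_pos hγ hv) (gauge_pos hγ (neg_ne_zero.mpr hv))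
  have hcoer : ∀ s : ℝ, |s| * c - γ (-x) ≤ φ s := by
    intro s
    have h1 : γ (s • v) ≤ φ s + γ (-x) := by
      have : s • v = (x + s • v) + (-x) := by module
      rw [this]; exact hγ.2.2.2 _ _
    have h2 : |s| * c ≤ γ (s • v) := by
      rcases le_or_gt 0 s with hs | hs
      · rw [gauge_smul hγ v hs, abs_of_nonneg hs]
        exact mul_le_mul_of_nonneg_left (min_le_left _ _) hs
      · have : s • v = (-s) • (-v) := by module
        rw [this, gauge_smul hγ (-v) (by linarith), abs_of_neg hs]
        exact mul_le_mul_of_nonneg_left (min_le_right _ _) (by linarith)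
    linarith
  obtain ⟨R, hR⟩ : ∃ R : ℝ, R = (φ 0 + γ (-x)) / c + 1 := ⟨_, rfl⟩
  have hR0 : 0 < R := by
    have h1 : 0 ≤ φ 0 := hγ.1 _
    have h2 : 0 ≤ γ (-x) := hγ.1 _
    have : 0 ≤ (φ 0 + γ (-x)) / c := div_nonneg (by linarith) (le_of_lt hc0)
    linarith
  obtain ⟨t, htmem, htmin⟩ := isCompact_Icc.exists_isMinOn (Set.nonempty_Icc.mpr (by linarith))
    (hcont.continuousOn (s := Set.Icc (-R) R))
  refine ⟨t, fun s => ?_⟩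
  rcases le_or_gt (|s|) R with hsR | hsR
  · exact htmin (Set.mem_Icc.mpr (abs_le.mp hsR))
  · have h0mem : (0:ℝ) ∈ Set.Icc (-R) R := Set.mem_Icc.mpr ⟨by linarith, le_of_lt hR0⟩
    have ht0 : φ t ≤ φ 0 := htmin h0mem
    have : φ 0 + γ (-x) < |s| * c := by
      have h1 : (φ 0 + γ (-x)) / c < |s| := by linarith
      rw [div_lt_iff₀ hc0] at h1
      linarith [h1]
    have := hcoer s
    linarith

theorem bir_iff (x z : EuclideanSpace ℝ (Fin d)) : BirkhoffEps γ 0 x z ↔ Bir γ x z := by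
  constructor <;> intro hh l <;> have := hh l <;> simpa using this

theorem bir_scalar (hγ : IsGauge γ) {z : EuclideanSpace ℝ (Fin d)} (hz : z ≠ 0) {t : ℝ}
    (hb : Bir γ (t • z) z) : t = 0 := by
  have h := hb (-t)
  rw [show t • z + (-t) • z = (0 : EuclideanSpace ℝ (Fin d)) by module, gauge_zero hγ] at h
  have : γ (t • z) = 0 := le_antisymm h (hγ.1 _)
  have := hγ.2.1 _ this
  rcases smul_eq_zero.mp this with h' | h'
  · exact h'
  · exact absurd h' hz

/-- Left additivity implies sign-symmetry of Birkhoff orthogonality. -/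
theorem bir_neg (hγ : IsGauge γ)
    (h : ∀ x y z : EuclideanSpace ℝ (Fin d),
      BirkhoffEps γ 0 x z → BirkhoffEps γ 0 y z → BirkhoffEps γ 0 (x + y) z)
    {u z : EuclideanSpace ℝ (Fin d)} (hz : z ≠ 0) (hb : Bir γ u z) : Bir γ (-u) z := by
  obtain ⟨t, ht⟩ := min_exists hγ (-u) hz
  have hb2 : Bir γ (-u + t • z) z := by
    intro l
    have := ht (t + l)
    rw [show -u + (t + l) • z = (-u + t • z) + l • z by module] at this
    exact this
  have hb3 := h u (-u + t • z) z ((bir_iff u z).mpr hb) ((bir_iff _ z).mpr hb2)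
  rw [show u + (-u + t • z) = t • z by module] at hb3
  have ht0 : t = 0 := bir_scalar hγ hz ((bir_iff _ z).mp hb3)
  rw [ht0] at hb2
  simpa using hb2

/-- One-sided key inequality. -/
theorem keyA (hγ : IsGauge γ)
    (h : ∀ x y z : EuclideanSpace ℝ (Fin d),
      BirkhoffEps γ 0 x z → BirkhoffEps γ 0 y z → BirkhoffEps γ 0 (x + y) z)
    {u w : EuclideanSpace ℝ (Fin d)}
    (hind : ∀ a b : ℝ, a • u + b • w = 0 → a = 0 ∧ b = 0) :
    γ (-u) * rd γ u w ≤ γ u * rd γ (-u) (-w) := by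
  have hu : u ≠ 0 := by
    intro hc
    have := (hind 1 0 (by rw [hc]; module)).1
    norm_num at this
  have hgu : 0 < γ u := gauge_pos hγ hu
  set a : ℝ := -(rd γ u w) / γ u with ha
  set z : EuclideanSpace ℝ (Fin d) := w + a • u with hzdef
  have hz : z ≠ 0 := by
    intro hc
    have := (hind a 1 (by rw [← hc, hzdef]; module)).2
    norm_num at this
  have hrdz : rd γ u z = 0 := by
    rw [hzdef, rd_shift hγ u w a, ha]
    field_simp
    ring
  have hrdz' : 0 ≤ rd γ u (-z) := by
    have hneg : -z = -w + (-a) • u := by rw [hzdef]; module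
    rw [hneg, rd_shift hγ u (-w) (-a)]
    have hpair := rd_pair_nonneg hγ u w
    have : -a * γ u = rd γ u w := by
      rw [ha]; field_simp
    linarith
  have hbir : Bir γ u z := by
    intro l
    rcases le_or_gt 0 l with hl | hl
    · have := gauge_ge_support hγ u z hl
      rw [hrdz] at this
      simpa using this
    · have hl' : 0 ≤ -l := by linarith
      have := gauge_ge_support hγ u (-z) hl'
      have hvec : u + (-l) • (-z) = u + l • z := by module
      rw [hvec] at this
      nlinarith [hrdz']
  have hbir2 : Bir γ (-u) z := bir_neg hγ h hz hbir
  have hbir3 : Bir γ (-u) (-z) := by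
    intro l
    have := hbir2 (-l)
    rwa [show -u + (-l) • z = -u + l • (-z) by module] at this
  have hrd3 : 0 ≤ rd γ (-u) (-z) := rd_nonneg_of_bir hγ hbir3
  have hneg2 : -z = -w + a • (-u) := by rw [hzdef]; module
  rw [hneg2, rd_shift hγ (-u) (-w) a] at hrd3
  have : -(a * γ (-u)) ≤ rd γ (-u) (-w) := by linarith
  have h2 : rd γ u w * γ (-u) / γ u ≤ rd γ (-u) (-w) := by
    rw [ha] at this
    have heq : -((-(rd γ u w) / γ u) * γ (-u)) = rd γ u w * γ (-u) / γ u := by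
      field_simp
    rwa [heq] at this
  rw [div_le_iff₀ hgu] at h2
  nlinarith [h2]

theorem keyEq (hγ : IsGauge γ)
    (h : ∀ x y z : EuclideanSpace ℝ (Fin d),
      BirkhoffEps γ 0 x z → BirkhoffEps γ 0 y z → BirkhoffEps γ 0 (x + y) z)
    {u w : EuclideanSpace ℝ (Fin d)}
    (hind : ∀ a b : ℝ, a • u + b • w = 0 → a = 0 ∧ b = 0) :
    γ (-u) * rd γ u w = γ u * rd γ (-u) (-w) := by
  have h1 := keyA hγ h hind
  have hind' : ∀ a b : ℝ, a • (-u) + b • (-w) = 0 → a = 0 ∧ b = 0 := by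
    intro a b hab
    have hz : (-a) • u + (-b) • w = 0 := by
      rw [show (-a) • u + (-b) • w = a • (-u) + b • (-w) by module, hab]
    obtain ⟨h1', h2'⟩ := hind (-a) (-b) hz
    exact ⟨by linarith, by linarith⟩
  have h2 := keyA hγ h hind'
  rw [neg_neg, neg_neg] at h2
  linarith

/-- Ratio lemma: for linearly independent x w, γ x γ(-w) = γ w γ(-x). -/
theorem ratio_eq (hγ : IsGauge γ)
    (h : ∀ x y z : EuclideanSpace ℝ (Fin d),
      BirkhoffEps γ 0 x z → BirkhoffEps γ 0 y z → BirkhoffEps γ 0 (x + y) z)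
    {x w : EuclideanSpace ℝ (Fin d)}
    (hind : ∀ a b : ℝ, a • x + b • w = 0 → a = 0 ∧ b = 0) :
    γ x * γ (-w) = γ w * γ (-x) := by
  set v : EuclideanSpace ℝ (Fin d) := w - x with hv
  have hindt : ∀ t : ℝ, ∀ a b : ℝ, a • (x + t • v) + b • v = 0 → a = 0 ∧ b = 0 := by
    intro t a b hab
    have hexp : (a - a * t - b) • x + (a * t + b) • w = 0 := by
      rw [← hab, hv]; module
    obtain ⟨h1, h2⟩ := hind _ _ hexp
    constructor
    · linarith
    · have : a = 0 := by linarith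
      rw [this] at h2; simpa using h2
  have hune : ∀ t : ℝ, x + t • v ≠ 0 := by
    intro t hc
    have := (hindt t 1 0 (by rw [hc]; module)).1
    norm_num at this
  set q : ℝ → ℝ := fun t => γ (x + t • v) with hq
  set Q : ℝ → ℝ := fun t => γ (-x + t • (-v)) with hQ
  have hQu : ∀ t : ℝ, -x + t • (-v) = -(x + t • v) := by intro t; module
  have hQpos : ∀ t : ℝ, 0 < Q t := by
    intro t
    rw [hQ]
    simp only
    rw [hQu t]
    exact gauge_pos hγ (neg_ne_zero.mpr (hune t))
  have hqpos : ∀ t : ℝ, 0 < q t := fun t => gauge_pos hγ (hune t)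
  set R : ℝ → ℝ := fun t => q t / Q t with hR
  have hderiv : ∀ t : ℝ, HasDerivWithinAt R 0 (Set.Ici t) t := by
    intro t
    have hDq : HasDerivWithinAt q (rd γ (x + t • v) v) (Set.Ici t) t := hasDeriv_gauge hγ x v t
    have hDQ : HasDerivWithinAt Q (rd γ (-x + t • (-v)) (-v)) (Set.Ici t) t :=
      hasDeriv_gauge hγ (-x) (-v) t
    have hkey := keyEq hγ h (hindt t)
    have hDR := hDq.div hDQ (ne_of_gt (hQpos t))
    have hval : (rd γ (x + t • v) v * Q t - q t * rd γ (-x + t • (-v)) (-v)) / Q t ^ 2 = 0 := by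
      have hQt : Q t = γ (-(x + t • v)) := by rw [hQ]; simp only; rw [hQu t]
      have hqt : q t = γ (x + t • v) := rfl
      have hrdQ : rd γ (-x + t • (-v)) (-v) = rd γ (-(x + t • v)) (-v) := by rw [hQu t]
      rw [hQt, hqt, hrdQ]
      rw [div_eq_zero_iff]
      left
      linarith [hkey]
    rwa [hval] at hDR
  have hcont : ContinuousOn R (Set.Icc 0 1) := by
    apply ContinuousOn.div
    · exact (gauge_line_lip hγ x v).continuousOn
    · exact (gauge_line_lip hγ (-x) (-v)).continuousOn
    · intro t _
      exact ne_of_gt (hQpos t)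
  have hconst := constant_of_has_deriv_right_zero hcont
    (fun t _ => hderiv t) 1 (Set.mem_Icc.mpr ⟨zero_le_one, le_refl 1⟩)
  have hR1 : q 1 / Q 1 = q 0 / Q 0 := hconst
  have hq1 : q 1 = γ w := by rw [hq]; simp only; rw [show x + (1:ℝ) • v = w by rw [hv]; module]
  have hQ1 : Q 1 = γ (-w) := by
    rw [hQ]; simp only; rw [show -x + (1:ℝ) • (-v) = -w by rw [hv]; module]
  have hq0 : q 0 = γ x := by rw [hq]; simp only; rw [show x + (0:ℝ) • v = x by module]
  have hQ0 : Q 0 = γ (-x) := by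
    rw [hQ]; simp only; rw [show -x + (0:ℝ) • (-v) = -x by module]
  rw [hq1, hQ1, hq0, hQ0] at hR1
  have hw : w ≠ 0 := by
    intro hc
    have := (hind 0 1 (by rw [hc]; module)).2
    norm_num at this
  have hx : x ≠ 0 := by
    intro hc
    have := (hind 1 0 (by rw [hc]; module)).1
    norm_num at this
  have h1 : 0 < γ (-w) := gauge_pos hγ (neg_ne_zero.mpr hw)
  have h2 : 0 < γ (-x) := gauge_pos hγ (neg_ne_zero.mpr hx)
  field_simp at hR1
  linarith [hR1]

end BirkhoffAux

theorem left_additive_implies_norm (hd : 2 ≤ d)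
    (γ : EuclideanSpace ℝ (Fin d) → ℝ) (hγ : IsGauge γ)
    (h : ∀ x y z : EuclideanSpace ℝ (Fin d),
      BirkhoffEps γ 0 x z → BirkhoffEps γ 0 y z → BirkhoffEps γ 0 (x + y) z) :
    ∀ x, γ (-x) = γ x := by
  intro x
  by_cases hx : x = 0
  · rw [hx, neg_zero]
  -- find w linearly independent from x
  have hspan : ∃ w : EuclideanSpace ℝ (Fin d), w ∉ Submodule.span ℝ ({x} : Set _) := by
    by_contra hc
    push_neg at hc
    have htop : Submodule.span ℝ ({x} : Set (EuclideanSpace ℝ (Fin d))) = ⊤ :=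
      Submodule.eq_top_iff'.mpr hc
    have h1 : Module.finrank ℝ (EuclideanSpace ℝ (Fin d)) = d := by
      simp [finrank_euclideanSpace]
    have h2 : Module.finrank ℝ
        (Submodule.span ℝ ({x} : Set (EuclideanSpace ℝ (Fin d)))) = 1 :=
      finrank_span_singleton hx
    rw [htop, finrank_top] at h2
    rw [h1] at h2
    omega
  obtain ⟨w, hw⟩ := hspan
  have hind : ∀ a b : ℝ, a • x + b • w = 0 → a = 0 ∧ b = 0 := by
    intro a b hab
    by_cases hb : b = 0
    · subst hb
      simp only [zero_smul, add_zero] at hab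
      rcases smul_eq_zero.mp hab with h' | h'
      · exact ⟨h', rfl⟩
      · exact absurd h' hx
    · exfalso
      apply hw
      have hw' : w = (-a / b) • x := by
        have hbw : b • w = (-a) • x := by
          have h' := hab
          rw [add_comm, add_eq_zero_iff_eq_neg] at h'
          rw [h']; module
        calc w = b⁻¹ • (b • w) := by rw [smul_smul, inv_mul_cancel₀ hb, one_smul]
          _ = b⁻¹ • ((-a) • x) := by rw [hbw]
          _ = (-a / b) • x := by rw [smul_smul, ← div_eq_inv_mul]
      rw [hw']
      exact Submodule.smul_mem _ _ (Submodule.mem_span_singleton_self x)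
  have hind2 : ∀ a b : ℝ, a • w + b • (-x) = 0 → a = 0 ∧ b = 0 := by
    intro a b hab
    have : (-b) • x + a • w = 0 := by rw [← hab]; module
    obtain ⟨h1, h2⟩ := hind _ _ this
    exact ⟨h2, by linarith⟩
  have r1 := BirkhoffAux.ratio_eq hγ h hind
  have r2 := BirkhoffAux.ratio_eq hγ h hind2
  rw [neg_neg] at r2
  -- r1 : γ x * γ (-w) = γ w * γ (-x)
  -- r2 : γ w * γ x = γ (-x) * γ (-w)
  have hA : 0 < γ x := BirkhoffAux.gauge_pos hγ hx
  have hB : 0 < γ (-x) := BirkhoffAux.gauge_pos hγ (neg_ne_zero.mpr hx)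
  have hwne : w ≠ 0 := fun hc => by
    have := (hind 0 1 (by rw [hc]; module)).2
    norm_num at this
  have hC : 0 < γ w := BirkhoffAux.gauge_pos hγ hwne
  have hD : 0 < γ (-w) := BirkhoffAux.gauge_pos hγ (neg_ne_zero.mpr hwne)
  nlinarith [r1, r2, mul_pos hC hD, mul_pos hA hB, sq_nonneg (γ x - γ (-x)), sq_nonneg (γ x + γ (-x))]
end
end

section
/- Let γ be a gauge on ℝ^d and x ∈ ℝ^d \ {0}. Then for all y ∈ ℝ^d, the set {α ∈ ℝ : γ(αx + y + x) = γ(αx + y − x)} is a non-empty compact interval. -/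
open scoped RealInnerProductSpace

noncomputable section

variable {d : ℕ}

lemma gauge_convexOn (γ : EuclideanSpace ℝ (Fin d) → ℝ) (hγ : IsGauge γ) :
    ConvexOn ℝ Set.univ γ := by
  refine ⟨convex_univ, ?_⟩
  intro u _ v _ a b ha hb hab
  rcases ha.eq_or_lt with rfl | ha'
  · simp at hab; simp [hab]
  rcases hb.eq_or_lt with rfl | hb'
  · simp at hab; simp [hab]
  calc γ (a • u + b • v) ≤ γ (a • u) + γ (b • v) := hγ.2.2.2 _ _
    _ = a * γ u + b * γ v := by rw [hγ.2.2.1 _ _ ha', hγ.2.2.1 _ _ hb']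

lemma convex_diff_mono (g : ℝ → ℝ) (hg : ConvexOn ℝ Set.univ g) :
    Monotone (fun α => g (α + 1) - g (α - 1)) := by
  intro p q hpq
  rcases hpq.eq_or_lt with rfl | h
  · exact le_rfl
  have hD : 0 < q - p + 2 := by linarith
  set t : ℝ := 2 / (q - p + 2) with ht
  set s : ℝ := (q - p) / (q - p + 2) with hs
  have hts : t + s = 1 := by rw [ht, hs]; field_simp; ring
  have ht0 : 0 < t := by positivity
  have hs0 : 0 ≤ s := div_nonneg (by linarith) hD.le
  have h1 : g (p + 1) ≤ s * g (p - 1) + t * g (q + 1) := by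
    have := hg.2 (Set.mem_univ (p - 1)) (Set.mem_univ (q + 1)) hs0 ht0.le (by linarith)
    have he : s • (p - 1) + t • (q + 1) = p + 1 := by
      simp only [smul_eq_mul, hs, ht]; field_simp; ring
    rwa [he] at this
  have h2 : g (q - 1) ≤ t * g (p - 1) + s * g (q + 1) := by
    have := hg.2 (Set.mem_univ (p - 1)) (Set.mem_univ (q + 1)) ht0.le hs0 (by linarith)
    have he : t • (p - 1) + s • (q + 1) = q - 1 := by
      simp only [smul_eq_mul, hs, ht]; field_simp; ring
    rwa [he] at this
  have hs1 : s = 1 - t := by linarith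
  rw [hs1] at h1 h2
  simp only
  nlinarith [h1, h2]

theorem bisector_directional_convexity (γ : EuclideanSpace ℝ (Fin d) → ℝ)
    (hγ : IsGauge γ) (x : EuclideanSpace ℝ (Fin d)) (hx : x ≠ 0)
    (y : EuclideanSpace ℝ (Fin d)) :
    ∃ a b : ℝ, a ≤ b ∧
      {α : ℝ | γ (α • x + y + x) = γ (α • x + y - x)} = Set.Icc a b := by
  have hγconv := gauge_convexOn γ hγ
  set g : ℝ → ℝ := fun α => γ (α • x + y) with hgdef
  have hgconv : ConvexOn ℝ Set.univ g := by
    have h := hγconv.comp_affineMap (AffineMap.lineMap y (x + y) : ℝ →ᵃ[ℝ] _)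
    have he : (γ ∘ (AffineMap.lineMap y (x + y) : ℝ →ᵃ[ℝ] _)) = g := by
      funext α
      simp only [hgdef, Function.comp_apply, AffineMap.lineMap_apply, vsub_eq_sub,
        vadd_eq_add, add_sub_cancel_right]
    rw [he] at h
    simpa using h
  have hgcont : Continuous g := by
    have h := hgconv.continuousOn isOpen_univ
    exact continuousOn_univ.mp h
  set f : ℝ → ℝ := fun α => g (α + 1) - g (α - 1) with hfdef
  have hfmono : Monotone f := convex_diff_mono g hgconv
  have hfcont : Continuous f :=
    (hgcont.comp (continuous_id.add continuous_const)).sub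
      (hgcont.comp (continuous_id.sub continuous_const))
  have hγx : 0 < γ x := (hγ.1 x).lt_of_ne fun h => hx (hγ.2.1 x h.symm)
  have hγnx : 0 < γ (-x) :=
    (hγ.1 (-x)).lt_of_ne fun h => (neg_ne_zero.mpr hx) (hγ.2.1 (-x) h.symm)
  have hlow : ∀ c : ℝ, 0 < c → c * γ x - γ (-y) ≤ g c := by
    intro c hc
    have h1 : γ (c • x) ≤ γ (c • x + y) + γ (-y) := by
      have h := hγ.2.2.2 (c • x + y) (-y)
      simpa using h
    rw [hγ.2.2.1 x c hc] at h1
    simpa [hgdef] using by linarith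
  have hlow' : ∀ c : ℝ, 0 < c → c * γ (-x) - γ (-y) ≤ g (-c) := by
    intro c hc
    have h1 : γ (c • (-x)) ≤ γ (c • (-x) + y) + γ (-y) := by
      have h := hγ.2.2.2 (c • (-x) + y) (-y)
      simpa using h
    rw [hγ.2.2.1 (-x) c hc] at h1
    rw [smul_neg] at h1
    show c * γ (-x) - γ (-y) ≤ γ ((-c) • x + y)
    rw [neg_smul]
    linarith
  -- a point where f is positive
  have hpos : ∃ α, 0 < f α := by
    by_contra hcon
    push_neg at hcon
    have hchain : ∀ n : ℕ, g (1 + 2 * n) ≤ g 1 := by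
      intro n
      induction n with
      | zero => simp
      | succ n ih =>
        have h := hcon (2 + 2 * (n : ℝ))
        simp only [hfdef] at h
        have e1 : (2 + 2 * (n : ℝ)) + 1 = 1 + 2 * ((n : ℝ) + 1) := by ring
        have e2 : (2 + 2 * (n : ℝ)) - 1 = 1 + 2 * (n : ℝ) := by ring
        rw [e1, e2] at h
        push_cast
        linarith
    obtain ⟨n, hn⟩ := exists_nat_gt ((g 1 + γ (-y)) / γ x)
    have h1 : (1 + 2 * (n : ℝ)) * γ x - γ (-y) ≤ g (1 + 2 * n) := hlow _ (by positivity)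
    have h2 := hchain n
    rw [div_lt_iff₀ hγx] at hn
    nlinarith [Nat.cast_nonneg (α := ℝ) n, hγx]
  -- a point where f is negative
  have hneg : ∃ α, f α < 0 := by
    by_contra hcon
    push_neg at hcon
    have hchain : ∀ n : ℕ, g (-(1 + 2 * n)) ≤ g (-1) := by
      intro n
      induction n with
      | zero => simp
      | succ n ih =>
        have h := hcon (-(2 + 2 * (n : ℝ)))
        simp only [hfdef] at h
        have e1 : -(2 + 2 * (n : ℝ)) + 1 = -(1 + 2 * (n : ℝ)) := by ring
        have e2 : -(2 + 2 * (n : ℝ)) - 1 = -(1 + 2 * ((n : ℝ) + 1)) := by ring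
        rw [e1, e2] at h
        push_cast
        linarith
    obtain ⟨n, hn⟩ := exists_nat_gt ((g (-1) + γ (-y)) / γ (-x))
    have h1 : (1 + 2 * (n : ℝ)) * γ (-x) - γ (-y) ≤ g (-(1 + 2 * n)) :=
      hlow' _ (by positivity)
    have h2 := hchain n
    rw [div_lt_iff₀ hγnx] at hn
    nlinarith [Nat.cast_nonneg (α := ℝ) n, hγnx]
  obtain ⟨αp, hαp⟩ := hpos
  obtain ⟨αm, hαm⟩ := hneg
  have hmp : αm ≤ αp := by
    by_contra h
    push_neg at h
    exact absurd (hfmono h.le) (by linarith)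
  -- a zero of f by IVT
  have hz : ∃ c, f c = 0 := by
    have h0 : (0 : ℝ) ∈ Set.Icc (f αm) (f αp) := ⟨hαm.le, hαp.le⟩
    obtain ⟨c, _, hc⟩ := intermediate_value_Icc hmp hfcont.continuousOn h0
    exact ⟨c, hc⟩
  obtain ⟨c, hc⟩ := hz
  set S : Set ℝ := {α | f α = 0} with hSdef
  have hSclosed : IsClosed S := isClosed_singleton.preimage hfcont
  have hSne : S.Nonempty := ⟨c, hc⟩
  have hSbb : BddBelow S := by
    refine ⟨αm, fun s hs => ?_⟩
    by_contra h
    push_neg at h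
    have := hfmono h.le
    rw [hs] at this
    linarith
  have hSba : BddAbove S := by
    refine ⟨αp, fun s hs => ?_⟩
    by_contra h
    push_neg at h
    have := hfmono h.le
    rw [hs] at this
    linarith
  refine ⟨sInf S, sSup S, csInf_le_csSup hSne hSbb hSba, ?_⟩
  have ha : sInf S ∈ S := hSclosed.csInf_mem hSne hSbb
  have hb : sSup S ∈ S := hSclosed.csSup_mem hSne hSba
  have hSeq : {α : ℝ | γ (α • x + y + x) = γ (α • x + y - x)} = S := by
    ext α
    simp only [hSdef, Set.mem_setOf_eq, hfdef, hgdef, sub_eq_zero]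
    have e1 : (α + 1) • x + y = α • x + y + x := by rw [add_smul, one_smul]; abel
    have e2 : (α - 1) • x + y = α • x + y - x := by rw [sub_smul, one_smul]; abel
    rw [e1, e2]
  rw [hSeq]
  ext s
  constructor
  · exact fun hs => ⟨csInf_le hSbb hs, le_csSup hSba hs⟩
  · rintro ⟨h1, h2⟩
    have l1 := hfmono h1
    have l2 := hfmono h2
    have ha0 : f (sInf S) = 0 := ha
    have hb0 : f (sSup S) = 0 := hb
    show f s = 0
    linarith
end
end
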